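/- arXiv:2405.20066 — 5 statements merged into one kernel-verified Lean document; each statement's English description precedes it below -/
import Mathlib

section
/- Let T, T' ⊆ ℝ^D be linear subspaces with dim T = d ≥ d' = dim T', and let θ_1 ≤ … ≤ θ_d be the principal angles between T and T' (with θ_k = π/2 for k > d'). For all h_∥ ≥ h_⊥ > 0, the d-dimensional Hausdorff measure of T ∩ S_{T'}(0, h_∥, h_⊥) is at most 4^d ∏_{k=1}^d min{ h_∥ , h_⊥ / sin θ_k }, with the convention h_⊥/sin 0 = +∞. -/
open scoped RealInnerProductSpace MeasureTheory ENNReal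

noncomputable section

/-- The slab `S_{T'}(x, h∥, h⊥) := x + B_{T'}(0,h∥) + B_{T'ᗮ}(0,h⊥)`. -/
def slab {D : ℕ} (T' : Submodule ℝ (EuclideanSpace ℝ (Fin D)))
    (x : EuclideanSpace ℝ (Fin D)) (hpar hperp : ℝ) :
    Set (EuclideanSpace ℝ (Fin D)) :=
  {z | ∃ a ∈ T', ∃ b ∈ T'ᗮ, ‖a‖ ≤ hpar ∧ ‖b‖ ≤ hperp ∧ z = x + a + b}

section Aux
open MeasureTheory Metric Set Filter
open scoped ENNReal NNReal Topology


variable {d : ℕ}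

local notation "E" d => EuclideanSpace ℝ (Fin d)

lemma omega_pos (d : ℕ) : 0 < volume (ball (0 : EuclideanSpace ℝ (Fin d)) 1) :=
  measure_ball_pos _ _ one_pos

lemma omega_ne_top (d : ℕ) : volume (ball (0 : EuclideanSpace ℝ (Fin d)) 1) ≠ ⊤ :=
  (measure_ball_lt_top).ne

lemma ediam_closedBall' {X : Type*} [PseudoMetricSpace X] (x : X) {r : ℝ} (hr : 0 ≤ r) :
    EMetric.diam (Metric.closedBall x r) ≤ 2 * ENNReal.ofReal r := by
  rw [← Metric.emetric_closedBall hr]; exact EMetric.diam_closedBall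

set_option maxHeartbeats 1000000 in
lemma hausdorff_le_aux (d : ℕ) (s : Set (EuclideanSpace ℝ (Fin d))) {ε : ℝ≥0∞}
    (hε : ε ≠ 0) :
    μH[(d : ℝ)] s ≤ 2 ^ d / volume (ball (0 : EuclideanSpace ℝ (Fin d)) 1)
      * (volume s + ε) := by
  set ω := volume (ball (0 : EuclideanSpace ℝ (Fin d)) 1) with hω
  have hcov : ∀ n : ℕ, ∃ (t : Set (EuclideanSpace ℝ (Fin d))) (r : EuclideanSpace ℝ (Fin d) → ℝ),
      t.Countable ∧ (∀ x ∈ t, r x ∈ Ioo (0:ℝ) (1/(n+1))) ∧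
      (s ⊆ ⋃ x ∈ t, closedBall x (r x)) ∧
      (∑' x : t, volume (closedBall (x : EuclideanSpace ℝ (Fin d)) (r x))) ≤ volume s + ε := by
    intro n
    have hn : (0:ℝ) < 1/(n+1) := by positivity
    obtain ⟨t, r, tc, -, hr, hcov, hsum⟩ :=
      Besicovitch.exists_closedBall_covering_tsum_measure_le (volume) hε
        (fun _ => Ioo (0:ℝ) (1/(n+1))) s
        (fun x _ δ hδ => by
          refine ⟨min (1/((n:ℝ)+1)) δ / 2, ⟨⟨by positivity, ?_⟩, by positivity, ?_⟩⟩
          · calc min (1/((n:ℝ)+1)) δ / 2 ≤ (1/((n:ℝ)+1)) / 2 := by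
                  gcongr; exact min_le_left _ _
              _ < 1/((n:ℝ)+1) := half_lt_self hn
          · calc min (1/((n:ℝ)+1)) δ / 2 ≤ δ / 2 := by gcongr; exact min_le_right _ _
              _ < δ := half_lt_self hδ)
    exact ⟨t, r, tc, hr, hcov, hsum⟩
  choose t r tc hr hcov hsum using hcov
  haveI : ∀ n : ℕ, Countable (t n) := fun n => (tc n).to_subtype
  have key := Measure.hausdorffMeasure_le_liminf_tsum (d : ℝ) s
      (l := atTop) (fun n : ℕ => ENNReal.ofReal (2/((n:ℝ)+1)))
      (by
        have h0 : Tendsto (fun n : ℕ => 2/((n:ℝ)+1)) atTop (𝓝 0) := by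
          have := (tendsto_add_atTop_iff_nat 1).2 (tendsto_const_div_atTop_nhds_zero_nat (2:ℝ))
          simpa using this
        simpa using (ENNReal.tendsto_ofReal h0))
      (fun n (i : t n) => closedBall (i : EuclideanSpace ℝ (Fin d)) (r n i))
      (Eventually.of_forall fun n => by
        intro i
        refine le_trans (ediam_closedBall' _ (hr n i i.2).1.le) ?_
        show 2 * ENNReal.ofReal (r n i) ≤ ENNReal.ofReal (2/((n:ℝ)+1))
        rw [show ENNReal.ofReal (2/((n:ℝ)+1)) = 2 * ENNReal.ofReal (1/((n:ℝ)+1)) by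
          rw [← ENNReal.ofReal_ofNat 2, ← ENNReal.ofReal_mul (by norm_num), mul_one_div]]
        exact mul_le_mul_right (ENNReal.ofReal_le_ofReal (hr n i i.2).2.le) _)
      (Eventually.of_forall fun n => by
        refine (hcov n).trans ?_
        rw [Set.biUnion_eq_iUnion])
  refine key.trans ?_
  have hle : ∀ n : ℕ, (∑' i : t n,
      EMetric.diam (closedBall (i : EuclideanSpace ℝ (Fin d)) (r n i)) ^ (d:ℝ))
      ≤ 2 ^ d / ω * (volume s + ε) := by
    intro n
    have hterm : ∀ i : t n,
        EMetric.diam (closedBall (i : EuclideanSpace ℝ (Fin d)) (r n i)) ^ (d:ℝ)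
        ≤ 2 ^ d / ω * volume (closedBall (i : EuclideanSpace ℝ (Fin d)) (r n i)) := by
      intro i
      have hri : 0 < r n i := (hr n i i.2).1
      have hvol : volume (closedBall (i : EuclideanSpace ℝ (Fin d)) (r n i))
          = ENNReal.ofReal (r n i ^ d) * ω := by
        rw [hω, Measure.addHaar_closedBall _ _ hri.le]
        simp
      have hdiam : EMetric.diam (closedBall (i : EuclideanSpace ℝ (Fin d)) (r n i)) ^ (d:ℝ)
          ≤ 2 ^ d * ENNReal.ofReal (r n i ^ d) := by
        rw [ENNReal.rpow_natCast]
        calc EMetric.diam (closedBall (i : EuclideanSpace ℝ (Fin d)) (r n i)) ^ d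
            ≤ (2 * ENNReal.ofReal (r n i)) ^ d :=
              pow_le_pow_left' (ediam_closedBall' _ hri.le) d
          _ = 2 ^ d * ENNReal.ofReal (r n i ^ d) := by
              rw [mul_pow, ENNReal.ofReal_pow hri.le]
      have hcancel : 2 ^ d / ω * (ENNReal.ofReal (r n i ^ d) * ω)
          = 2 ^ d * ENNReal.ofReal (r n i ^ d) := by
        rw [div_eq_mul_inv, mul_mul_mul_comm,
          ENNReal.inv_mul_cancel (omega_pos d).ne' (omega_ne_top d), mul_one]
      rw [hvol, hcancel]
      exact hdiam
    calc (∑' i : t n, EMetric.diam (closedBall (i : EuclideanSpace ℝ (Fin d)) (r n i)) ^ (d:ℝ))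
        ≤ ∑' i : t n, 2 ^ d / ω * volume (closedBall (i : EuclideanSpace ℝ (Fin d)) (r n i)) :=
          ENNReal.tsum_le_tsum hterm
      _ = 2 ^ d / ω * ∑' i : t n, volume (closedBall (i : EuclideanSpace ℝ (Fin d)) (r n i)) := by
          rw [ENNReal.tsum_mul_left]
      _ ≤ 2 ^ d / ω * (volume s + ε) := mul_le_mul_right (hsum n) _
  calc liminf (fun n => ∑' i : t n,
        EMetric.diam (closedBall (i : EuclideanSpace ℝ (Fin d)) (r n i)) ^ (d:ℝ)) atTop
      ≤ liminf (fun _ : ℕ => 2 ^ d / ω * (volume s + ε)) atTop :=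
        liminf_le_liminf (Eventually.of_forall hle)
    _ = 2 ^ d / ω * (volume s + ε) := liminf_const _

end Aux
section Aux2
open MeasureTheory Metric Set Filter
open scoped ENNReal NNReal Topology

lemma hausdorff_le_mul_volume (d : ℕ) (s : Set (EuclideanSpace ℝ (Fin d))) :
    μH[(d : ℝ)] s ≤ 2 ^ d / volume (ball (0 : EuclideanSpace ℝ (Fin d)) 1) * volume s := by
  set ω := volume (ball (0 : EuclideanSpace ℝ (Fin d)) 1) with hω
  have hc0 : (2:ℝ≥0∞) ^ d / ω ≠ 0 :=
    ENNReal.div_ne_zero.mpr ⟨pow_ne_zero d two_ne_zero, omega_ne_top d⟩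
  have hctop : (2:ℝ≥0∞) ^ d / ω ≠ ⊤ :=
    (ENNReal.div_lt_top (by simp [ENNReal.pow_ne_top]) (omega_pos d).ne').ne
  rcases eq_or_ne (volume s) ⊤ with hvs | hvs
  · rw [hvs, ENNReal.mul_top hc0]; exact le_top
  refine ENNReal.le_of_forall_pos_le_add fun ε hε hb => ?_
  have hε' : (ε : ℝ≥0∞) / (2 ^ d / ω) ≠ 0 :=
    ENNReal.div_ne_zero.mpr ⟨by exact_mod_cast hε.ne', hctop⟩
  refine (hausdorff_le_aux d s hε').trans ?_
  rw [mul_add, ENNReal.mul_div_cancel hc0 hctop]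

/-- The diagonal linear map on Euclidean space. -/
noncomputable def diagMap (d : ℕ) (ax : Fin d → ℝ) :
    EuclideanSpace ℝ (Fin d) →ₗ[ℝ] EuclideanSpace ℝ (Fin d) :=
  (WithLp.linearEquiv 2 ℝ (Fin d → ℝ)).symm.toLinearMap ∘ₗ
    Matrix.toLin' (Matrix.diagonal ax) ∘ₗ (WithLp.linearEquiv 2 ℝ (Fin d → ℝ)).toLinearMap

lemma diagMap_det (d : ℕ) (ax : Fin d → ℝ) :
    LinearMap.det (diagMap d ax) = ∏ k, ax k := by
  have h := LinearMap.det_conj (Matrix.toLin' (Matrix.diagonal ax))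
    (WithLp.linearEquiv 2 ℝ (Fin d → ℝ)).symm
  simp only [LinearEquiv.symm_symm] at h
  rw [diagMap, h, LinearMap.det_toLin', Matrix.det_diagonal]

lemma diagMap_apply (d : ℕ) (ax : Fin d → ℝ) (c : EuclideanSpace ℝ (Fin d)) (k : Fin d) :
    diagMap d ax c k = ax k * c k := by
  simp [diagMap, Matrix.toLin'_apply, Matrix.mulVec_diagonal]

lemma hausdorff_diag_ball_le (d : ℕ) (ax : Fin d → ℝ) (h0 : ∀ k, 0 ≤ ax k) :
    μH[(d : ℝ)] (diagMap d ax '' closedBall 0 1)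
      ≤ 2 ^ d * ∏ k, ENNReal.ofReal (ax k) := by
  set ω := volume (ball (0 : EuclideanSpace ℝ (Fin d)) 1) with hω
  have hvol : volume (diagMap d ax '' closedBall 0 1)
      = (∏ k, ENNReal.ofReal (ax k)) * ω := by
    rw [Measure.addHaar_image_linearMap, diagMap_det]
    rw [abs_of_nonneg (Finset.prod_nonneg fun k _ => h0 k),
      ENNReal.ofReal_prod_of_nonneg (fun k _ => h0 k)]
    congr 1
    rw [Measure.addHaar_closedBall _ _ (zero_le_one), one_pow]
    simp
    exact hω.symm
  refine (hausdorff_le_mul_volume d _).trans ?_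
  rw [hvol, div_eq_mul_inv, mul_mul_mul_comm,
    ENNReal.inv_mul_cancel (omega_pos d).ne' (omega_ne_top d), mul_one]

section LinAlg

open scoped RealInnerProductSpace

variable {D d : ℕ}

/-- The linear map sending coordinates to a combination of given vectors. -/
noncomputable def sumSmulMap (e : Fin d → EuclideanSpace ℝ (Fin D)) :
    EuclideanSpace ℝ (Fin d) →ₗ[ℝ] EuclideanSpace ℝ (Fin D) where
  toFun c := ∑ k, c k • e k
  map_add' x y := by
    show ∑ k, (x + y) k • e k = ∑ k, x k • e k + ∑ k, y k • e k
    rw [← Finset.sum_add_distrib]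
    refine Finset.sum_congr rfl fun k _ => ?_
    rw [show (x + y) k = x k + y k from rfl, add_smul]
  map_smul' r x := by
    simp only [RingHom.id_apply]
    rw [Finset.smul_sum]
    refine Finset.sum_congr rfl fun k _ => ?_
    rw [show (r • x) k = r * x k from rfl, mul_smul]

lemma sumSmulMap_apply (e : Fin d → EuclideanSpace ℝ (Fin D)) (c : EuclideanSpace ℝ (Fin d)) :
    sumSmulMap e c = ∑ k, c k • e k := rfl

lemma sumSmulMap_norm (e : Fin d → EuclideanSpace ℝ (Fin D)) (he : Orthonormal ℝ e)
    (c : EuclideanSpace ℝ (Fin d)) : ‖sumSmulMap e c‖ = ‖c‖ := by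
  have h1 : ⟪sumSmulMap e c, sumSmulMap e c⟫ = ∑ k, c k * c k := by
    rw [sumSmulMap_apply]
    simpa using he.inner_sum c c Finset.univ
  have h2 : ⟪c, c⟫ = ∑ k, c k * c k := by
    rw [PiLp.inner_apply]
    simp [RCLike.inner_apply, starRingEnd_apply]
    exact Finset.sum_congr rfl fun k _ => sq (c k)
  have := h1.trans h2.symm
  rw [real_inner_self_eq_norm_sq, real_inner_self_eq_norm_sq] at this
  have h := congrArg Real.sqrt this
  rwa [Real.sqrt_sq (norm_nonneg _), Real.sqrt_sq (norm_nonneg _)] at h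

lemma sumSmulMap_range (e : Fin d → EuclideanSpace ℝ (Fin D)) :
    LinearMap.range (sumSmulMap e) = Submodule.span ℝ (Set.range e) := by
  apply le_antisymm
  · rintro x ⟨c, rfl⟩
    rw [sumSmulMap_apply]
    exact Submodule.sum_mem _ fun k _ =>
      Submodule.smul_mem _ _ (Submodule.subset_span ⟨k, rfl⟩)
  · rw [Submodule.span_le]
    rintro x ⟨k, rfl⟩
    refine ⟨EuclideanSpace.single k 1, ?_⟩
    rw [sumSmulMap_apply]
    simp [EuclideanSpace.single_apply]

end LinAlg

end Aux2

open MeasureTheory Metric Set Filter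
open scoped Matrix ENNReal

set_option maxHeartbeats 3200000 in
/-- Volume bound for the intersection of a `d`-dimensional subspace with a slab around a
`d'`-dimensional subspace, in terms of the principal angles `θ k = arccos σ_k(UᵀU')`
(extended by `π/2` for `k > d'`; here `σ` enumerates, in decreasing order, the square roots
of the eigenvalues of `(UᵀU')(UᵀU')ᵀ`).  The convention `h⊥ / sin 0 = ∞` is realized by
the `ℝ≥0∞`-valued division. -/
theorem stmt_1 {D d d' : ℕ} (hd' : d' ≤ d)
    (T T' : Submodule ℝ (EuclideanSpace ℝ (Fin D)))
    (hT : Module.finrank ℝ T = d) (hT' : Module.finrank ℝ T' = d')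
    (u : Fin d → EuclideanSpace ℝ (Fin D)) (u' : Fin d' → EuclideanSpace ℝ (Fin D))
    (hu : Orthonormal ℝ u) (hu' : Orthonormal ℝ u')
    (hsu : Submodule.span ℝ (Set.range u) = T)
    (hsu' : Submodule.span ℝ (Set.range u') = T')
    (A : Matrix (Fin d) (Fin d') ℝ) (hA : ∀ i j, A i j = ⟪u i, u' j⟫)
    (hH : (A * A.transpose).IsHermitian)
    (σ θ : Fin d → ℝ) (π : Equiv.Perm (Fin d))
    (hσ : ∀ k, σ k = Real.sqrt (hH.eigenvalues (π k)))
    (hσmono : Antitone σ)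
    (hθ : ∀ k, θ k = Real.arccos (σ k))
    (hpar hperp : ℝ) (hperp0 : 0 < hperp) (hpp : hperp ≤ hpar) :
    μH[(d : ℝ)] ((T : Set (EuclideanSpace ℝ (Fin D))) ∩ slab T' 0 hpar hperp)
      ≤ 4 ^ d * ∏ k : Fin d,
          min (ENNReal.ofReal hpar)
            (ENNReal.ofReal hperp / ENNReal.ofReal (Real.sin (θ k))) := by
  classical
  have hpar0 : 0 < hpar := lt_of_lt_of_le hperp0 hpp
  set lam := hH.eigenvalues with hlamdef
  set v : Fin d → (Fin d → ℝ) := fun k => ⇑(hH.eigenvectorBasis (π k)) with hvdef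
  -- dot products of the eigenvectors
  have hvdot : ∀ k l, v k ⬝ᵥ v l = if k = l then (1:ℝ) else 0 := by
    intro k l
    have h1 := orthonormal_iff_ite.mp hH.eigenvectorBasis.orthonormal (π k) (π l)
    rw [PiLp.inner_apply] at h1
    simp only [RCLike.inner_apply, starRingEnd_apply, star_trivial] at h1
    simpa [dotProduct, hvdef, EmbeddingLike.apply_eq_iff_eq, mul_comm] using h1
  have hAAT : ∀ l, (A * A.transpose) *ᵥ v l = lam (π l) • v l := fun l =>
    hH.mulVec_eigenvectorBasis (π l)
  have hkey : ∀ k l, (A.transpose *ᵥ v k) ⬝ᵥ (A.transpose *ᵥ v l)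
      = lam (π l) * (if k = l then (1:ℝ) else 0) := by
    intro k l
    rw [Matrix.mulVec_transpose A (v k), ← Matrix.dotProduct_mulVec,
      Matrix.mulVec_mulVec, hAAT, dotProduct_smul, smul_eq_mul, hvdot]
  have huT : ∀ i, u i ∈ T := fun i => hsu ▸ Submodule.subset_span ⟨i, rfl⟩
  have hu'T' : ∀ m, u' m ∈ T' := fun m => hsu' ▸ Submodule.subset_span ⟨m, rfl⟩
  set e : Fin d → EuclideanSpace ℝ (Fin D) := fun k => ∑ i, v k i • u i with hedef
  have he : Orthonormal ℝ e := by
    rw [orthonormal_iff_ite]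
    intro k l
    have h2 := hu.inner_sum (v k) (v l) Finset.univ
    simp only [starRingEnd_apply, star_trivial] at h2
    have h3 := hvdot k l
    rw [dotProduct] at h3
    rw [hedef]
    simp only []
    rw [h2, h3]
  have heT : ∀ k, e k ∈ T := fun k =>
    Submodule.sum_mem _ fun i _ => Submodule.smul_mem _ _ (huT i)
  have heNorm : ∀ k, ‖e k‖ = 1 := fun k => he.1 k
  -- inner products with u'
  have hip : ∀ m k, ⟪u' m, e k⟫ = (A.transpose *ᵥ v k) m := by
    intro m k
    rw [hedef]
    simp only []
    rw [inner_sum]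
    rw [Matrix.mulVec, dotProduct]
    refine Finset.sum_congr rfl fun i _ => ?_
    rw [real_inner_smul_right, Matrix.transpose_apply, hA, real_inner_comm]
    ring
  -- eigenvalue bounds
  have hlam0 : ∀ k, 0 ≤ lam (π k) := by
    intro k
    have h1 := hkey k k
    rw [if_pos rfl, mul_one] at h1
    rw [← h1, dotProduct]
    exact Finset.sum_nonneg fun m _ => mul_self_nonneg _
  have hlamsum : ∀ k, lam (π k) = ∑ m, ⟪u' m, e k⟫ ^ 2 := by
    intro k
    have h1 := hkey k k
    rw [if_pos rfl, mul_one] at h1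
    rw [← h1, dotProduct]
    exact Finset.sum_congr rfl fun m _ => by rw [hip]; ring
  have hlam1 : ∀ k, lam (π k) ≤ 1 := by
    intro k
    have h2 := hu'.sum_inner_products_le (x := e k) (s := Finset.univ)
    rw [hlamsum k]
    calc ∑ m, ⟪u' m, e k⟫ ^ 2 = ∑ m, ‖⟪u' m, e k⟫‖ ^ 2 := by
          refine Finset.sum_congr rfl fun m _ => ?_
          rw [Real.norm_eq_abs, sq_abs]
      _ ≤ ‖e k‖ ^ 2 := h2
      _ = 1 := by rw [heNorm k]; norm_num
  -- the semiaxes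
  set nu : Fin d → ℝ := fun k => max (lam (π k) / hpar^2) ((1 - lam (π k)) / hperp^2)
    with hnudef
  have hnu_left : ∀ k, lam (π k) / hpar^2 ≤ nu k := fun k => le_max_left _ _
  have hnu_right : ∀ k, (1 - lam (π k)) / hperp^2 ≤ nu k := fun k => le_max_right _ _
  have hnu_ge : ∀ k, 1/(2*hpar^2) ≤ nu k := by
    intro k
    have h2 : (1 - lam (π k)) / hpar^2 ≤ (1 - lam (π k)) / hperp^2 :=
      div_le_div_of_nonneg_left (by linarith [hlam1 k]) (by positivity) (by nlinarith)
    have h3 : 1/hpar^2 = lam (π k)/hpar^2 + (1 - lam (π k))/hpar^2 := by ring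
    have h6 : 1/(2*hpar^2) = (1/hpar^2)/2 := by ring
    linarith [hnu_left k, hnu_right k]
  have hnupos : ∀ k, 0 < nu k := fun k =>
    lt_of_lt_of_le (by positivity) (hnu_ge k)
  set ax : Fin d → ℝ := fun k => Real.sqrt 2 / Real.sqrt (nu k) with haxdef
  have haxpos : ∀ k, 0 < ax k := fun k =>
    div_pos (Real.sqrt_pos.mpr two_pos) (Real.sqrt_pos.mpr (hnupos k))
  have haxsq : ∀ k, ax k ^ 2 = 2 / nu k := by
    intro k
    rw [haxdef]
    simp only []
    rw [div_pow, Real.sq_sqrt two_pos.le, Real.sq_sqrt (hnupos k).le]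
  have hax_le : ∀ k, ax k ≤ 2 * hpar := by
    intro k
    have hsq : ax k ^ 2 ≤ (2 * hpar)^2 := by
      rw [haxsq]
      calc 2 / nu k ≤ 2 / (1/(2*hpar^2)) :=
            div_le_div_of_nonneg_left two_pos.le (by positivity) (hnu_ge k)
        _ = (2*hpar)^2 := by field_simp
    calc ax k = Real.sqrt (ax k ^ 2) := (Real.sqrt_sq (haxpos k).le).symm
      _ ≤ Real.sqrt ((2*hpar)^2) := Real.sqrt_le_sqrt hsq
      _ = 2*hpar := Real.sqrt_sq (by positivity)
  have hsin : ∀ k, Real.sin (θ k) = Real.sqrt (1 - lam (π k)) := by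
    intro k
    rw [hθ, Real.sin_arccos, hσ, Real.sq_sqrt (hlam0 k)]
  have hsin0 : ∀ k, 0 ≤ Real.sin (θ k) := fun k => by
    rw [hsin]; exact Real.sqrt_nonneg _
  have hax_le2 : ∀ k, 0 < Real.sin (θ k) → ax k ≤ 2 * (hperp / Real.sin (θ k)) := by
    intro k hs
    have h1 : 0 < 1 - lam (π k) := by
      have := hs; rw [hsin] at this; exact Real.sqrt_pos.mp this
    have hsq : ax k ^ 2 ≤ (2 * (hperp / Real.sin (θ k)))^2 := by
      rw [haxsq]
      have h2 : (2 * (hperp / Real.sin (θ k)))^2 = 4 * hperp^2 / (1 - lam (π k)) := by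
        rw [mul_pow, div_pow, hsin, Real.sq_sqrt h1.le]; ring
      rw [h2]
      rw [div_le_div_iff₀ (hnupos k) h1]
      have h3 := hnu_right k
      have h4 : (1 - lam (π k)) / hperp^2 * (1 - lam (π k)) ≤ nu k * (1 - lam (π k)) :=
        mul_le_mul_of_nonneg_right h3 h1.le
      have h5 : (1 - lam (π k)) / hperp^2 * (1 - lam (π k)) * hperp^2
          = (1 - lam (π k))^2 := by field_simp
      nlinarith [sq_nonneg (1 - lam (π k)), sq_nonneg hperp]
    calc ax k = Real.sqrt (ax k ^ 2) := (Real.sqrt_sq (haxpos k).le).symm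
      _ ≤ Real.sqrt ((2 * (hperp / Real.sin (θ k)))^2) := Real.sqrt_le_sqrt hsq
      _ = 2 * (hperp / Real.sin (θ k)) := Real.sqrt_sq (by positivity)
  -- the isometry
  set F := sumSmulMap e with hFdef
  have hspan : Submodule.span ℝ (Set.range e) = T := by
    apply Submodule.eq_of_le_of_finrank_le
    · rw [Submodule.span_le]
      rintro x ⟨k, rfl⟩
      exact heT k
    · rw [hT, finrank_span_eq_card he.linearIndependent, Fintype.card_fin]
  have hT_sub : ∀ z, z ∈ T → ∃ c, F c = z := by
    intro z hz
    have h1 : z ∈ LinearMap.range F := by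
      rw [hFdef, sumSmulMap_range, hspan]
      exact hz
    exact h1
  -- main set inclusion
  have hincl : (T : Set (EuclideanSpace ℝ (Fin D))) ∩ slab T' 0 hpar hperp
      ⊆ ⇑F '' (diagMap d ax '' Metric.closedBall 0 1) := by
    rintro z ⟨hzT, a, haT', b, hbT', hna, hnb, hzab⟩
    rw [zero_add] at hzab
    obtain ⟨c, hc⟩ := hT_sub z hzT
    have haR : ∃ am, sumSmulMap u' am = a := by
      have h1 : a ∈ LinearMap.range (sumSmulMap u') := by
        rw [sumSmulMap_range, hsu']
        exact haT'
      exact h1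
    obtain ⟨am, ham⟩ := haR
    have hab0 : ⟪a, b⟫ = 0 := (Submodule.mem_orthogonal T' b).mp hbT' a haT'
    have hz2 : ‖z‖^2 = ∑ k, c k ^ 2 := by
      rw [← hc, ← real_inner_self_eq_norm_sq, sumSmulMap_apply]
      have := he.inner_sum c c Finset.univ
      simp only [starRingEnd_apply, star_trivial] at this
      rw [this]
      exact Finset.sum_congr rfl fun k _ => (sq (c k)).symm
    have ha2 : ‖a‖^2 = ∑ m, am m ^ 2 := by
      rw [← ham, ← real_inner_self_eq_norm_sq, sumSmulMap_apply]
      have := hu'.inner_sum am am Finset.univ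
      simp only [starRingEnd_apply, star_trivial] at this
      rw [this]
      exact Finset.sum_congr rfl fun m _ => (sq (am m)).symm
    have hsumz : ‖z‖^2 = ‖a‖^2 + ‖b‖^2 := by
      rw [hzab, norm_add_sq_real, hab0]
      ring
    have ham_eq : ∀ m, am m = ∑ k, c k * (A.transpose *ᵥ v k) m := by
      intro m
      have hb0 : ⟪u' m, b⟫ = 0 :=
        (Submodule.mem_orthogonal T' b).mp hbT' (u' m) (hu'T' m)
      have h2 : ⟪u' m, z⟫ = am m := by
        rw [hzab, inner_add_right, hb0, add_zero, ← ham, sumSmulMap_apply,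
          hu'.inner_right_fintype]
      have h3 : ⟪u' m, z⟫ = ∑ k, c k * ⟪u' m, e k⟫ := by
        rw [← hc, sumSmulMap_apply, inner_sum]
        exact Finset.sum_congr rfl fun k _ => real_inner_smul_right _ _ _
      rw [← h2, h3]
      exact Finset.sum_congr rfl fun k _ => by rw [hip]
    have haquad : ‖a‖^2 = ∑ k, lam (π k) * c k ^ 2 := by
      rw [ha2]
      have expand : ∀ m : Fin d', am m ^ 2
          = ∑ k, ∑ l, c k * c l * ((A.transpose *ᵥ v k) m * (A.transpose *ᵥ v l) m) := by
        intro m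
        rw [ham_eq, sq, Finset.sum_mul_sum]
        exact Finset.sum_congr rfl fun k _ => Finset.sum_congr rfl fun l _ => by ring
      calc ∑ m, am m ^ 2
          = ∑ m : Fin d', ∑ k, ∑ l,
              c k * c l * ((A.transpose *ᵥ v k) m * (A.transpose *ᵥ v l) m) :=
            Finset.sum_congr rfl fun m _ => expand m
        _ = ∑ k, ∑ l, c k * c l * ((A.transpose *ᵥ v k) ⬝ᵥ (A.transpose *ᵥ v l)) := by
            rw [Finset.sum_comm]
            refine Finset.sum_congr rfl fun k _ => ?_
            rw [Finset.sum_comm]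
            refine Finset.sum_congr rfl fun l _ => ?_
            rw [dotProduct, Finset.mul_sum]
        _ = ∑ k, lam (π k) * c k ^ 2 := by
            refine Finset.sum_congr rfl fun k _ => ?_
            rw [Finset.sum_eq_single k]
            · rw [hkey, if_pos rfl]; ring
            · intro l _ hl
              rw [hkey, if_neg (Ne.symm hl)]; ring
            · intro h; exact absurd (Finset.mem_univ k) h
    have hbquad : ‖b‖^2 = ∑ k, (1 - lam (π k)) * c k ^ 2 := by
      have h1 : ‖b‖^2 = ‖z‖^2 - ‖a‖^2 := by linarith
      rw [h1, hz2, haquad, ← Finset.sum_sub_distrib]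
      exact Finset.sum_congr rfl fun k _ => by ring
    have hca : ∑ k, lam (π k) * c k ^ 2 ≤ hpar^2 := by
      rw [← haquad]
      exact pow_le_pow_left₀ (norm_nonneg a) hna 2
    have hcb : ∑ k, (1 - lam (π k)) * c k ^ 2 ≤ hperp^2 := by
      rw [← hbquad]
      exact pow_le_pow_left₀ (norm_nonneg b) hnb 2
    -- the coordinates lie in the ellipsoid
    have hsum1 : ∑ k, (c k / ax k)^2 ≤ 1 := by
      have hterm : ∀ k, (c k / ax k)^2 = c k ^2 * nu k / 2 := by
        intro k
        rw [div_pow, haxsq, div_div_eq_mul_div]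
      have h2 : ∑ k, c k ^2 * nu k ≤ 2 := by
        have hterm2 : ∀ k, c k ^2 * nu k
            ≤ lam (π k) * c k ^2 / hpar^2 + (1 - lam (π k)) * c k ^2 / hperp^2 := by
          intro k
          have hmax : nu k ≤ lam (π k)/hpar^2 + (1 - lam (π k))/hperp^2 :=
            max_le_add_of_nonneg (div_nonneg (hlam0 k) (by positivity))
              (div_nonneg (by linarith [hlam1 k]) (by positivity))
          calc c k ^2 * nu k
              ≤ c k ^2 * (lam (π k)/hpar^2 + (1 - lam (π k))/hperp^2) :=
                mul_le_mul_of_nonneg_left hmax (sq_nonneg _)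
            _ = lam (π k) * c k ^2 / hpar^2 + (1 - lam (π k)) * c k ^2 / hperp^2 := by
                ring
        calc ∑ k, c k ^2 * nu k
            ≤ ∑ k, (lam (π k) * c k ^2 / hpar^2 + (1 - lam (π k)) * c k ^2 / hperp^2) :=
              Finset.sum_le_sum fun k _ => hterm2 k
          _ = (∑ k, lam (π k) * c k ^2)/hpar^2 + (∑ k, (1 - lam (π k)) * c k ^2)/hperp^2 := by
              rw [Finset.sum_add_distrib, ← Finset.sum_div, ← Finset.sum_div]
          _ ≤ hpar^2/hpar^2 + hperp^2/hperp^2 := by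
              have e1 : (∑ k, lam (π k) * c k ^2)/hpar^2 ≤ hpar^2/hpar^2 := by gcongr
              have e2 : (∑ k, (1 - lam (π k)) * c k ^2)/hperp^2 ≤ hperp^2/hperp^2 := by gcongr
              linarith
          _ = 2 := by
              rw [div_self (by positivity : hpar^2 ≠ 0), div_self (by positivity : hperp^2 ≠ 0)]
              norm_num
      calc ∑ k, (c k / ax k)^2 = ∑ k, c k ^2 * nu k / 2 :=
            Finset.sum_congr rfl fun k _ => hterm k
        _ = (∑ k, c k ^2 * nu k)/2 := by rw [Finset.sum_div]
        _ ≤ 2/2 := by linarith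
        _ = 1 := by norm_num
    set c' : EuclideanSpace ℝ (Fin d) := WithLp.toLp 2 (fun k => c k / ax k) with hc'def
    refine ⟨diagMap d ax c', ⟨c', ?_, rfl⟩, ?_⟩
    · rw [Metric.mem_closedBall, dist_zero_right]
      have hnc' : ‖c'‖ = Real.sqrt (∑ k, (c k / ax k)^2) := by
        rw [EuclideanSpace.norm_eq]
        congr 1
        refine Finset.sum_congr rfl fun k _ => ?_
        rw [show c' k = c k / ax k from rfl, Real.norm_eq_abs, sq_abs]
      rw [hnc']
      calc Real.sqrt (∑ k, (c k / ax k)^2) ≤ Real.sqrt 1 := Real.sqrt_le_sqrt hsum1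
        _ = 1 := Real.sqrt_one
    · have hdc : diagMap d ax c' = c := by
        ext k
        rw [diagMap_apply]
        rw [show c' k = c k / ax k from rfl]
        exact mul_div_cancel₀ _ (haxpos k).ne'
      rw [hdc, hc]
  -- per-coordinate bound in ℝ≥0∞
  have hk_bound : ∀ k, ENNReal.ofReal (ax k)
      ≤ 2 * min (ENNReal.ofReal hpar)
          (ENNReal.ofReal hperp / ENNReal.ofReal (Real.sin (θ k))) := by
    intro k
    have hb1 : ENNReal.ofReal (ax k) ≤ 2 * ENNReal.ofReal hpar := by
      calc ENNReal.ofReal (ax k) ≤ ENNReal.ofReal (2 * hpar) :=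
            ENNReal.ofReal_le_ofReal (hax_le k)
        _ = 2 * ENNReal.ofReal hpar := by
            rw [ENNReal.ofReal_mul (by norm_num)]
            norm_num
    rcases eq_or_lt_of_le (hsin0 k) with h0 | hpos
    · rw [← h0, ENNReal.ofReal_zero, ENNReal.div_zero
        (by simpa using (ENNReal.ofReal_pos.mpr hperp0).ne')]
      rw [min_eq_left le_top]
      exact hb1
    · have hb2 : ENNReal.ofReal (ax k)
          ≤ 2 * (ENNReal.ofReal hperp / ENNReal.ofReal (Real.sin (θ k))) := by
        calc ENNReal.ofReal (ax k) ≤ ENNReal.ofReal (2 * (hperp / Real.sin (θ k))) :=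
              ENNReal.ofReal_le_ofReal (hax_le2 k hpos)
          _ = 2 * (ENNReal.ofReal hperp / ENNReal.ofReal (Real.sin (θ k))) := by
              rw [ENNReal.ofReal_mul (by norm_num), ENNReal.ofReal_div_of_pos hpos]
              norm_num
      rcases le_total (ENNReal.ofReal hpar)
          (ENNReal.ofReal hperp / ENNReal.ofReal (Real.sin (θ k))) with hm | hm
      · rw [min_eq_left hm]; exact hb1
      · rw [min_eq_right hm]; exact hb2
  -- conclusion
  have hIso : Isometry ⇑F := by
    have : Isometry (LinearIsometry.mk F (sumSmulMap_norm e he)) :=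
      (LinearIsometry.mk F (sumSmulMap_norm e he)).isometry
    exact this
  calc μH[(d : ℝ)] ((T : Set (EuclideanSpace ℝ (Fin D))) ∩ slab T' 0 hpar hperp)
      ≤ μH[(d : ℝ)] (⇑F '' (diagMap d ax '' Metric.closedBall 0 1)) :=
        measure_mono hincl
    _ = μH[(d : ℝ)] (diagMap d ax '' Metric.closedBall 0 1) :=
        hIso.hausdorffMeasure_image (Or.inl (by positivity)) _
    _ ≤ 2 ^ d * ∏ k, ENNReal.ofReal (ax k) :=
        hausdorff_diag_ball_le d ax (fun k => (haxpos k).le)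
    _ ≤ 2 ^ d * ∏ k, (2 * min (ENNReal.ofReal hpar)
          (ENNReal.ofReal hperp / ENNReal.ofReal (Real.sin (θ k)))) := by
        exact mul_le_mul_right (Finset.prod_le_prod' fun k _ => hk_bound k) _
    _ = 4 ^ d * ∏ k, min (ENNReal.ofReal hpar)
          (ENNReal.ofReal hperp / ENNReal.ofReal (Real.sin (θ k))) := by
        rw [Finset.prod_mul_distrib, Finset.prod_const, Finset.card_univ,
          Fintype.card_fin, ← mul_assoc, ← mul_pow]
        norm_num
end
end

section
/- Let Ψ : 𝕄 → ℝ^D be an isometric C² immersion of a compact d-dimensional manifold with second fundamental form bounded by κ_max, fix x₀ ∈ 𝕄 and set x = Ψ(x₀). Then for every y₀ in the geodesic ball B_𝕄(x₀, 1/(4κ_max)) with y = Ψ(y₀), the Euclidean distance of y − x from the tangent space T := dΨ(x₀)[T_{x₀}𝕄] satisfies ‖(y − x) − π_T(y − x)‖ ≤ (κ_max/2)·‖y − x‖². -/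
open scoped Manifold RealInnerProductSpace
open Real Set Filter Topology

set_option maxHeartbeats 1000000

noncomputable section

lemma lemLip {E : Type*} [NormedAddCommGroup E] [NormedSpace ℝ E]
    (L : ℝ) (hL : 0 ≤ L) (Γ : ℝ → E) (hΓ : ContDiff ℝ 2 Γ)
    (hunit : ∀ t ∈ Set.Icc 0 L, ‖deriv Γ t‖ = 1) :
    ∀ t ∈ Set.Icc 0 L, ‖Γ t - Γ 0‖ ≤ t := by
  intro t ht
  have hdΓ : Differentiable ℝ Γ := hΓ.differentiable (by norm_num)
  have := Convex.norm_image_sub_le_of_norm_deriv_le (f := Γ) (s := Icc 0 L)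
    (fun x _ => hdΓ x) (fun x hx => le_of_eq (hunit x hx)) (convex_Icc 0 L)
    (left_mem_Icc.mpr hL) ht
  simpa [abs_of_nonneg ht.1] using this

lemma lemA {E : Type*} [NormedAddCommGroup E] [InnerProductSpace ℝ E]
    (κ L : ℝ) (hκ : 0 < κ) (hL : 0 ≤ L) (hκL : κ * L ≤ 1/4)
    (Γ : ℝ → E) (hΓ : ContDiff ℝ 2 Γ)
    (hunit : ∀ t ∈ Set.Icc 0 L, ‖deriv Γ t‖ = 1)
    (hacc : ∀ t ∈ Set.Icc 0 L, ‖deriv (deriv Γ) t‖ ≤ κ)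
    (n : E) (hn : ‖n‖ = 1) (hen : ⟪deriv Γ 0, n⟫ = 0) :
    ⟪Γ L - Γ 0, n⟫ ≤ κ/2 * ‖Γ L - Γ 0‖^2 := by
  set G := deriv Γ with hGdef
  set G2 := deriv G with hG2def
  have hΓ' : ContDiff ℝ (1+1) Γ := by
    rw [show ((1:WithTop ℕ∞)+1) = 2 from by norm_num]; exact hΓ
  have hdΓ : Differentiable ℝ Γ := hΓ.differentiable (by norm_num)
  have hG1 : ContDiff ℝ 1 G := (contDiff_succ_iff_deriv.mp hΓ').2.2
  have hdG : Differentiable ℝ G := hG1.differentiable (by norm_num)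
  have hd1 : ∀ t : ℝ, HasDerivAt Γ (G t) t := fun t => (hdΓ t).hasDerivAt
  have hd2 : ∀ t : ℝ, HasDerivAt G (G2 t) t := fun t => (hdG t).hasDerivAt
  set φ : ℝ → ℝ := fun t => κ/2 * ⟪Γ t - Γ 0, Γ t - Γ 0⟫ - ⟪Γ t - Γ 0, n⟫ with hφdef
  set φ' : ℝ → ℝ := fun t => κ * ⟪G t, Γ t - Γ 0⟫ - ⟪G t, n⟫ with hφ'def
  set φ'' : ℝ → ℝ := fun t => κ * (⟪G t, G t⟫ + ⟪G2 t, Γ t - Γ 0⟫) - ⟪G2 t, n⟫ with hφ''def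
  have hA : ∀ t : ℝ, HasDerivAt (fun s => Γ s - Γ 0) (G t) t := fun t => (hd1 t).sub_const _
  have hdφ : ∀ t : ℝ, HasDerivAt φ (φ' t) t := by
    intro t
    have h1 : HasDerivAt (fun s => ⟪Γ s - Γ 0, Γ s - Γ 0⟫)
        (⟪Γ t - Γ 0, G t⟫ + ⟪G t, Γ t - Γ 0⟫) t := (hA t).inner ℝ (hA t)
    have h2 : HasDerivAt (fun s => ⟪Γ s - Γ 0, n⟫) (⟪G t, n⟫) t := by
      have := (hA t).inner ℝ (hasDerivAt_const t n)
      simpa using this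
    have h3 := (h1.const_mul (κ/2)).sub h2
    have heq : κ/2 * (⟪Γ t - Γ 0, G t⟫ + ⟪G t, Γ t - Γ 0⟫) - ⟪G t, n⟫ = φ' t := by
      simp only [hφ'def]
      rw [real_inner_comm (Γ t - Γ 0) (G t)]; ring
    exact heq ▸ h3
  have hdφ' : ∀ t : ℝ, HasDerivAt φ' (φ'' t) t := by
    intro t
    have h1 : HasDerivAt (fun s => ⟪G s, Γ s - Γ 0⟫)
        (⟪G t, G t⟫ + ⟪G2 t, Γ t - Γ 0⟫) t := (hd2 t).inner ℝ (hA t)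
    have h2 : HasDerivAt (fun s => ⟪G s, n⟫) (⟪G2 t, n⟫) t := by
      have := (hd2 t).inner ℝ (hasDerivAt_const t n)
      simpa using this
    exact (h1.const_mul κ).sub h2
  have hnorm : ∀ t ∈ Icc 0 L, ‖Γ t - Γ 0‖ ≤ t := by
    intro t ht
    have := Convex.norm_image_sub_le_of_norm_deriv_le (f := Γ) (s := Icc 0 L)
      (fun x _ => hdΓ x) (fun x hx => le_of_eq (hunit x hx)) (convex_Icc 0 L)
      (left_mem_Icc.mpr hL) ht
    simpa [abs_of_nonneg ht.1] using this
  -- key differential inequality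
  have key : ∀ t ∈ Icc 0 L, 0 ≤ φ'' t + κ^2 * φ t := by
    intro t ht
    have hGt : ⟪G t, G t⟫ = 1 := by
      rw [real_inner_self_eq_norm_sq, hunit t ht]; norm_num
    have hs : ‖κ • (Γ t - Γ 0) - n‖^2 = 1 + 2*κ*(φ t) := by
      rw [norm_sub_sq_real, norm_smul, real_inner_smul_left, hn]
      simp only [hφdef, real_inner_self_eq_norm_sq]
      rw [mul_pow]
      simp [abs_of_pos hκ]
      ring
    have h1 : ⟪Γ t - Γ 0, n⟫ ≤ ‖Γ t - Γ 0‖ := by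
      calc ⟪Γ t - Γ 0, n⟫ ≤ ‖Γ t - Γ 0‖ * ‖n‖ := real_inner_le_norm _ n
      _ = ‖Γ t - Γ 0‖ := by rw [hn, mul_one]
    have h2 : ‖Γ t - Γ 0‖ ≤ t := hnorm t ht
    have h4 : κ * t ≤ 1/4 := le_trans (by nlinarith [ht.2] : κ * t ≤ κ * L) hκL
    have hφlb : -(1/4) ≤ κ * φ t := by
      have h3 : (0:ℝ) ≤ ⟪Γ t - Γ 0, Γ t - Γ 0⟫ := real_inner_self_nonneg
      simp only [hφdef]
      nlinarith [mul_le_mul_of_nonneg_left h1 hκ.le, mul_le_mul_of_nonneg_left h2 hκ.le,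
        mul_nonneg (mul_nonneg hκ.le hκ.le) h3]
    have hsle : ‖κ • (Γ t - Γ 0) - n‖ ≤ 1 + κ * φ t := by
      nlinarith [hs, norm_nonneg (κ • (Γ t - Γ 0) - n), hφlb, sq_nonneg (κ * φ t),
        sq_nonneg (‖κ • (Γ t - Γ 0) - n‖ - (1 + κ * φ t))]
    have hinner : -(κ * ‖κ • (Γ t - Γ 0) - n‖) ≤ ⟪G2 t, κ • (Γ t - Γ 0) - n⟫ := by
      have ha := abs_real_inner_le_norm (G2 t) (κ • (Γ t - Γ 0) - n)
      have hb := hacc t ht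
      have hc := norm_nonneg (κ • (Γ t - Γ 0) - n)
      have hd := neg_abs_le ⟪G2 t, κ • (Γ t - Γ 0) - n⟫
      nlinarith
    have hexp : φ'' t = κ + ⟪G2 t, κ • (Γ t - Γ 0) - n⟫ := by
      simp only [hφ''def, hGt, inner_sub_right, real_inner_smul_right]
      ring
    rw [hexp]
    nlinarith
  -- Sturm comparison
  set u : ℝ → ℝ := fun t => φ' t * Real.cos (κ*t) + κ * φ t * Real.sin (κ*t) with hudef
  have hcos : ∀ t : ℝ, HasDerivAt (fun s : ℝ => Real.cos (κ*s)) (-Real.sin (κ*t) * κ) t := by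
    intro t
    have h := (Real.hasDerivAt_cos (κ*t)).comp t ((hasDerivAt_id t).const_mul κ)
    simpa [Function.comp_def] using h
  have hsin : ∀ t : ℝ, HasDerivAt (fun s : ℝ => Real.sin (κ*s)) (Real.cos (κ*t) * κ) t := by
    intro t
    have h := (Real.hasDerivAt_sin (κ*t)).comp t ((hasDerivAt_id t).const_mul κ)
    simpa [Function.comp_def, mul_comm] using h
  have hdu : ∀ t : ℝ, HasDerivAt u ((φ'' t + κ^2 * φ t) * Real.cos (κ*t)) t := by
    intro t
    have h1 := ((hdφ' t).mul (hcos t)).add (((hdφ t).const_mul κ).mul (hsin t))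
    exact h1.congr_deriv (by ring)
  have hcospos : ∀ t ∈ Icc 0 L, 0 < Real.cos (κ*t) := by
    intro t ht
    apply Real.cos_pos_of_mem_Ioo
    have h0 : 0 ≤ κ * t := mul_nonneg hκ.le ht.1
    have h4 : κ * t ≤ 1/4 := le_trans (by nlinarith [ht.2] : κ * t ≤ κ * L) hκL
    constructor
    · linarith [Real.pi_gt_three]
    · linarith [Real.pi_gt_three]
  have humono : MonotoneOn u (Icc 0 L) := by
    apply monotoneOn_of_deriv_nonneg (convex_Icc 0 L)
    · exact (continuous_iff_continuousAt.mpr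
        (fun t => (hdu t).differentiableAt.continuousAt)).continuousOn
    · exact fun x _ => ((hdu x).differentiableAt).differentiableWithinAt
    · intro x hx
      rw [(hdu x).deriv]
      have hx' : x ∈ Icc 0 L := interior_subset hx
      exact mul_nonneg (key x hx') (hcospos x hx').le
  have hu0 : u 0 = 0 := by
    simp only [hudef, hφ'def, hφdef]
    simp [hen]
  have hunn : ∀ t ∈ Icc 0 L, 0 ≤ u t := by
    intro t ht
    have := humono (left_mem_Icc.mpr hL) ht ht.1
    rw [hu0] at this; exact this
  -- w = φ / cos
  have hdw : ∀ t ∈ Icc 0 L, HasDerivAt (fun s => φ s / Real.cos (κ*s))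
      (u t / (Real.cos (κ*t))^2) t := by
    intro t ht
    have h := (hdφ t).div (hcos t) (ne_of_gt (hcospos t ht))
    exact h.congr_deriv (by simp only [hudef]; ring)
  have hwmono : MonotoneOn (fun s => φ s / Real.cos (κ*s)) (Icc 0 L) := by
    apply monotoneOn_of_deriv_nonneg (convex_Icc 0 L)
    · apply ContinuousOn.div
      · exact (continuous_iff_continuousAt.mpr
          (fun t => (hdφ t).differentiableAt.continuousAt)).continuousOn
      · exact (Real.continuous_cos.comp (continuous_const.mul continuous_id)).continuousOn
      · exact fun t ht => ne_of_gt (hcospos t ht)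
    · intro x hx
      exact ((hdw x (interior_subset hx)).differentiableAt).differentiableWithinAt
    · intro x hx
      have hx' : x ∈ Icc 0 L := interior_subset hx
      rw [(hdw x hx').deriv]
      exact div_nonneg (hunn x hx') (sq_nonneg _)
  have hw0 : φ 0 / Real.cos (κ*0) = 0 := by
    simp only [hφdef]; simp
  have hφL : 0 ≤ φ L := by
    have h := hwmono (left_mem_Icc.mpr hL) (right_mem_Icc.mpr hL) hL
    simp only at h
    rw [hw0] at h
    have hc := hcospos L (right_mem_Icc.mpr hL)
    rcases div_nonneg_iff.mp h with ⟨h1, _⟩ | ⟨_, h2⟩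
    · exact h1
    · linarith
  have := hφL
  simp only [hφdef, real_inner_self_eq_norm_sq] at this
  linarith

lemma lemB {d D : ℕ} {M : Type*} [MetricSpace M]
    [ChartedSpace (EuclideanSpace ℝ (Fin d)) M]
    [IsManifold (𝓡 d) (⊤ : ℕ∞) M]
    (Ψ : M → EuclideanSpace ℝ (Fin D))
    (hΨ : ContMDiff (𝓡 d) 𝓘(ℝ, EuclideanSpace ℝ (Fin D)) 2 Ψ)
    (x₀ : M)
    (hinj : Function.Injective (mfderiv (𝓡 d) 𝓘(ℝ, EuclideanSpace ℝ (Fin D)) Ψ x₀))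
    (γ : ℝ → M) (hγ0 : γ 0 = x₀) (hγlip : LipschitzWith 1 γ)
    (L : ℝ) (hL : 0 < L)
    (hΓd : ContDiff ℝ 2 (Ψ ∘ γ))
    (hlip1 : ∀ t ∈ Set.Icc 0 L, ‖(Ψ ∘ γ) t - (Ψ ∘ γ) 0‖ ≤ t) :
    deriv (Ψ ∘ γ) 0 ∈
      LinearMap.range (ContinuousLinearMap.toLinearMap
        (mfderiv (𝓡 d) 𝓘(ℝ, EuclideanSpace ℝ (Fin D)) Ψ x₀) :
        TangentSpace (𝓡 d) x₀ →ₗ[ℝ] EuclideanSpace ℝ (Fin D)) := by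
  classical
  set Γ : ℝ → EuclideanSpace ℝ (Fin D) := Ψ ∘ γ with hΓdef
  set e := deriv Γ 0 with hedef
  set f := extChartAt (𝓡 d) x₀ with hfdef
  set z₀ := f x₀ with hz₀def
  set F : EuclideanSpace ℝ (Fin d) → EuclideanSpace ℝ (Fin D) := Ψ ∘ f.symm with hFdef
  have hmd : MDifferentiableAt (𝓡 d) 𝓘(ℝ, EuclideanSpace ℝ (Fin D)) Ψ x₀ :=
    hΨ.mdifferentiableAt (by norm_num)
  -- identify mfderiv with fderiv of F
  have hmf : mfderiv (𝓡 d) 𝓘(ℝ, EuclideanSpace ℝ (Fin D)) Ψ x₀ = fderiv ℝ F z₀ := by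
    rw [hmd.mfderiv]
    have h1 : Set.range (𝓡 d) = Set.univ := by simp
    rw [h1, fderivWithin_univ]
    have h2 : writtenInExtChartAt (𝓡 d) 𝓘(ℝ, EuclideanSpace ℝ (Fin D)) x₀ Ψ = F := by
      ext z
      simp [writtenInExtChartAt, hFdef, extChartAt_model_space_eq_id, hfdef, Function.comp, chartAt_self_eq]
    rw [h2]
  have hFC : ContDiffAt ℝ 2 F z₀ := by
    have h := (contMDiffAt_iff.mp (hΨ x₀)).2
    have h1 : Set.range (𝓡 d) = Set.univ := by simp
    rw [h1] at h
    rw [contDiffWithinAt_univ] at h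
    have : (↑(extChartAt 𝓘(ℝ, EuclideanSpace ℝ (Fin D)) (Ψ x₀)) ∘ Ψ ∘ ↑(extChartAt (𝓡 d) x₀).symm)
        = F := by
      ext z
      simp [hFdef, extChartAt_model_space_eq_id, Function.comp, hfdef, chartAt_self_eq]
    rw [this] at h
    exact_mod_cast h
  set Df := fderiv ℝ F z₀ with hDfdef
  have hDfinj : Function.Injective Df := by
    rw [← hmf]; exact hinj
  have hstrict : HasStrictFDerivAt F Df z₀ := hFC.hasStrictFDerivAt (by norm_num)
  -- antilipschitz constant for Df
  have hformEq : LinearMap.range (Df : EuclideanSpace ℝ (Fin d) →ₗ[ℝ] EuclideanSpace ℝ (Fin D))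
      = LinearMap.range (Df : EuclideanSpace ℝ (Fin d) →ₗ[ℝ] EuclideanSpace ℝ (Fin D)) := rfl
  set eqv := LinearEquiv.ofInjective (Df : EuclideanSpace ℝ (Fin d) →ₗ[ℝ] EuclideanSpace ℝ (Fin D))
    (by exact hDfinj) with heqvdef
  set ceqv := eqv.toContinuousLinearEquiv with hceqvdef
  obtain ⟨Kn, hanti0⟩ : ∃ K : NNReal, AntilipschitzWith K ceqv := ⟨_, ceqv.antilipschitz⟩
  set K' : ℝ := (Kn : ℝ) + 1 with hK'def
  have hK'pos : 0 < K' := by positivity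
  have hanti : ∀ z : EuclideanSpace ℝ (Fin d), ‖z‖ ≤ K' * ‖Df z‖ := by
    intro z
    have h := hanti0.le_mul_dist z 0
    rw [dist_eq_norm, sub_zero] at h
    have hc : dist (ceqv z) (ceqv 0) = ‖Df z‖ := by
      rw [map_zero, dist_eq_norm, sub_zero]
      have h2 : ((ceqv z : ↥(LinearMap.range (Df : EuclideanSpace ℝ (Fin d) →ₗ[ℝ] EuclideanSpace ℝ (Fin D)))) :
          EuclideanSpace ℝ (Fin D)) = Df z := by
        simp [hceqvdef, heqvdef]
      rw [show ‖ceqv z‖ = ‖Df z‖ from by rw [← h2]; rfl]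
    rw [hc] at h
    have hK : (Kn : ℝ) ≤ K' := by simp [hK'def]
    nlinarith [norm_nonneg (Df z)]
  -- conclude via closure of the range
  rw [hmf]
  have hclosed : IsClosed ((LinearMap.range (Df : EuclideanSpace ℝ (Fin d) →ₗ[ℝ] EuclideanSpace ℝ (Fin D)) : Submodule ℝ (EuclideanSpace ℝ (Fin D))) :
      Set (EuclideanSpace ℝ (Fin D))) := Submodule.closed_of_finiteDimensional _
  have hmem : e ∈ closure ((LinearMap.range (Df : EuclideanSpace ℝ (Fin d) →ₗ[ℝ] EuclideanSpace ℝ (Fin D)) : Submodule ℝ (EuclideanSpace ℝ (Fin D))) :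
      Set (EuclideanSpace ℝ (Fin D))) := by
    rw [Metric.mem_closure_iff]
    intro ε hε
    have hγc : ContinuousAt γ 0 := hγlip.continuous.continuousAt
    have hsrc : f.source ∈ 𝓝 x₀ := extChartAt_source_mem_nhds x₀
    have hevsrc : ∀ᶠ t in 𝓝 (0:ℝ), γ t ∈ f.source :=
      hγc.eventually_mem (by rw [hγ0]; exact hsrc)
    have hctend : Tendsto (fun t => f (γ t)) (𝓝 0) (𝓝 z₀) := by
      have h1 : ContinuousAt (↑f : M → EuclideanSpace ℝ (Fin d)) (γ 0) := by
        rw [hγ0]; exact continuousAt_extChartAt x₀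
      have h2 : Tendsto (fun t => (f : M → EuclideanSpace ℝ (Fin d)) (γ t)) (𝓝 (0:ℝ))
          (𝓝 ((f : M → EuclideanSpace ℝ (Fin d)) (γ 0))) := h1.comp hγc
      rwa [hγ0] at h2
    have hprod : Tendsto (fun t => (f (γ t), z₀)) (𝓝 (0:ℝ)) (𝓝 (z₀, z₀)) :=
      hctend.prodMk_nhds tendsto_const_nhds
    have lo := hstrict.isLittleO
    have hεA : (0:ℝ) < 1/(2*K') := by positivity
    have hεB : (0:ℝ) < ε/(4*K') := by positivity
    have evA : ∀ᶠ t in 𝓝 (0:ℝ),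
        ‖F (f (γ t)) - F z₀ - Df (f (γ t) - z₀)‖ ≤ (1/(2*K')) * ‖f (γ t) - z₀‖ :=
      hprod.eventually (lo.def hεA)
    have evB : ∀ᶠ t in 𝓝 (0:ℝ),
        ‖F (f (γ t)) - F z₀ - Df (f (γ t) - z₀)‖ ≤ (ε/(4*K')) * ‖f (γ t) - z₀‖ :=
      hprod.eventually (lo.def hεB)
    have hde : HasDerivAt Γ e 0 := ((hΓd.differentiable (by norm_num)) 0).hasDerivAt
    have hslopetend := hasDerivAt_iff_tendsto_slope.mp hde
    have evS : ∀ᶠ t in 𝓝[≠] (0:ℝ), dist (slope Γ 0 t) e < ε/2 :=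
      hslopetend.eventually (by
        have : Metric.ball e (ε/2) ∈ 𝓝 e := Metric.ball_mem_nhds e (by positivity)
        filter_upwards [this] with y hy using Metric.mem_ball.mp hy)
    have le1 : (𝓝[>] (0:ℝ)) ≤ 𝓝 (0:ℝ) := nhdsWithin_le_nhds
    have le2 : (𝓝[>] (0:ℝ)) ≤ 𝓝[≠] (0:ℝ) :=
      nhdsWithin_mono _ (fun x hx => ne_of_gt hx)
    have evC : ∀ᶠ t in 𝓝[>] (0:ℝ), t ∈ Set.Ioc 0 L :=
      Ioc_mem_nhdsGT_of_mem ⟨le_refl 0, hL⟩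
    obtain ⟨t, hsrct, hAt, hBt, hSt, hCt⟩ :=
      ((hevsrc.filter_mono le1).and ((evA.filter_mono le1).and ((evB.filter_mono le1).and
        ((evS.filter_mono le2).and evC)))).exists
    have htpos : 0 < t := hCt.1
    have htL : t ≤ L := hCt.2
    have hFz : F (f (γ t)) = Γ t := by
      simp only [hFdef, Function.comp_apply]
      rw [f.left_inv hsrct]
      simp [hΓdef]
    have hFz0 : F z₀ = Γ 0 := by
      simp only [hFdef, hz₀def, Function.comp_apply]
      rw [f.left_inv (mem_extChartAt_source x₀)]
      simp [hΓdef, hγ0]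
    rw [hFz, hFz0] at hAt hBt
    set z := f (γ t) with hzdef
    have hn1 : ‖Γ t - Γ 0‖ ≤ t := hlip1 t ⟨htpos.le, htL⟩
    have htri : ‖Df (z - z₀)‖ ≤ ‖Γ t - Γ 0‖ + ‖Γ t - Γ 0 - Df (z - z₀)‖ := by
      have h := norm_sub_le (Γ t - Γ 0) (Γ t - Γ 0 - Df (z - z₀))
      simpa using h
    have hhalf : K' * (1/(2*K')) = 1/2 := by field_simp
    have hz1 : ‖z - z₀‖ ≤ 2*K'*t := by
      have ha := hanti (z - z₀)
      nlinarith [norm_nonneg (z - z₀), norm_nonneg (Df (z - z₀))]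
    have hB2 : ‖Γ t - Γ 0 - Df (z - z₀)‖ ≤ (ε/2) * t := by
      have h1 : (ε/(4*K')) * ‖z - z₀‖ ≤ (ε/(4*K')) * (2*K'*t) :=
        mul_le_mul_of_nonneg_left hz1 (le_of_lt hεB)
      have h2 : (ε/(4*K')) * (2*K'*t) = (ε/2) * t := by field_simp; ring
      linarith
    have hslope : slope Γ 0 t = t⁻¹ • (Γ t - Γ 0) := by
      rw [slope_def_module]; simp
    refine ⟨t⁻¹ • Df (z - z₀), ?_, ?_⟩
    · have : t⁻¹ • Df (z - z₀) ∈ LinearMap.range (Df : EuclideanSpace ℝ (Fin d) →ₗ[ℝ] EuclideanSpace ℝ (Fin D)) :=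
        ⟨t⁻¹ • (z - z₀), by rw [map_smul]; rfl⟩
      exact this
    · have hd2 : dist (slope Γ 0 t) (t⁻¹ • Df (z - z₀)) ≤ ε/2 := by
        rw [hslope, dist_eq_norm, ← smul_sub, norm_smul]
        have h3 : ‖(t⁻¹ : ℝ)‖ = t⁻¹ := by
          rw [Real.norm_eq_abs, abs_of_pos (inv_pos.mpr htpos)]
        rw [h3]
        calc t⁻¹ * ‖Γ t - Γ 0 - Df (z - z₀)‖ ≤ t⁻¹ * ((ε/2) * t) :=
              mul_le_mul_of_nonneg_left hB2 (inv_nonneg.mpr htpos.le)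
          _ = ε/2 := by field_simp
      calc dist e (t⁻¹ • Df (z - z₀))
          ≤ dist e (slope Γ 0 t) + dist (slope Γ 0 t) (t⁻¹ • Df (z - z₀)) := dist_triangle _ _ _
        _ < ε/2 + ε/2 := by
            have h5 : dist e (slope Γ 0 t) < ε/2 := by rw [dist_comm]; exact hSt
            exact add_lt_add_of_lt_of_le h5 hd2
        _ = ε := by ring
  rwa [hclosed.closure_eq] at hmem

/-- For an isometric `C²` immersion `Ψ` with second fundamental form bounded by `κ`
(encoded through unit-speed minimizing geodesics), every point `y₀` in the geodesic ball
of radius `1/(4κ)` around `x₀` satisfies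
`‖(Ψ y₀ - Ψ x₀) - π_T(Ψ y₀ - Ψ x₀)‖ ≤ (κ/2)‖Ψ y₀ - Ψ x₀‖²`, where
`T = dΨ(x₀)[T_{x₀}𝕄]`. -/
theorem stmt_7 {d D : ℕ} {M : Type*} [MetricSpace M]
    [ChartedSpace (EuclideanSpace ℝ (Fin d)) M]
    [IsManifold (𝓡 d) (⊤ : ℕ∞) M] [CompactSpace M]
    (κ : ℝ) (hκ : 0 < κ)
    (Ψ : M → EuclideanSpace ℝ (Fin D))
    (hΨ : ContMDiff (𝓡 d) 𝓘(ℝ, EuclideanSpace ℝ (Fin D)) 2 Ψ)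
    (himm : ∀ p : M,
      Function.Injective (mfderiv (𝓡 d) 𝓘(ℝ, EuclideanSpace ℝ (Fin D)) Ψ p))
    (hgeo : ∀ x y : M, ∃ γ : ℝ → M,
      γ 0 = x ∧ γ (dist x y) = y ∧ LipschitzWith 1 γ ∧
      ContDiff ℝ 2 (Ψ ∘ γ) ∧
      (∀ t ∈ Set.Icc 0 (dist x y), ‖deriv (Ψ ∘ γ) t‖ = 1) ∧
      (∀ t ∈ Set.Icc 0 (dist x y), ‖deriv (deriv (Ψ ∘ γ)) t‖ ≤ κ))
    (x₀ : M)
    (T : Submodule ℝ (EuclideanSpace ℝ (Fin D)))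
    (hT : T = LinearMap.range (ContinuousLinearMap.toLinearMap
      (mfderiv (𝓡 d) 𝓘(ℝ, EuclideanSpace ℝ (Fin D)) Ψ x₀) :
      TangentSpace (𝓡 d) x₀ →ₗ[ℝ] EuclideanSpace ℝ (Fin D))) :
    ∀ y₀ ∈ Metric.closedBall x₀ (1 / (4 * κ)),
      ‖(Ψ y₀ - Ψ x₀) -
          (T.orthogonalProjectionOnto (Ψ y₀ - Ψ x₀) : EuclideanSpace ℝ (Fin D))‖
        ≤ κ / 2 * ‖Ψ y₀ - Ψ x₀‖ ^ 2 := by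
  intro y₀ hy₀
  set v : EuclideanSpace ℝ (Fin D) := Ψ y₀ - Ψ x₀ with hvdef
  set p : EuclideanSpace ℝ (Fin D) := (T.orthogonalProjectionOnto v : EuclideanSpace ℝ (Fin D))
    with hpdef
  by_cases hδ : ‖v - p‖ = 0
  · rw [hδ]
    positivity
  have hδpos : 0 < ‖v - p‖ := lt_of_le_of_ne (norm_nonneg _) (Ne.symm hδ)
  obtain ⟨γ, hγ0, hγL, hγlip, hΓd, hunit, hacc⟩ := hgeo x₀ y₀
  set L := dist x₀ y₀ with hLdef
  have hL0 : 0 ≤ L := dist_nonneg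
  have hLle : L ≤ 1/(4*κ) := by
    rw [hLdef, dist_comm]
    exact Metric.mem_closedBall.mp hy₀
  have hκL : κ * L ≤ 1/4 := by
    have := mul_le_mul_of_nonneg_left hLle hκ.le
    calc κ * L ≤ κ * (1/(4*κ)) := this
      _ = 1/4 := by field_simp
  have hLpos : 0 < L := by
    rcases lt_or_eq_of_le hL0 with h | h
    · exact h
    · exfalso
      have hxy : x₀ = y₀ := eq_of_dist_eq_zero h.symm
      have hv0 : v = 0 := by rw [hvdef, hxy, sub_self]
      have : p = 0 := by rw [hpdef, hv0]; simp
      rw [hv0, this, sub_zero, norm_zero] at hδpos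
      exact lt_irrefl _ hδpos
  have hlip1 : ∀ t ∈ Set.Icc 0 L, ‖(Ψ ∘ γ) t - (Ψ ∘ γ) 0‖ ≤ t :=
    lemLip L hL0 (Ψ ∘ γ) hΓd hunit
  have heT : deriv (Ψ ∘ γ) 0 ∈ T := by
    rw [hT]
    exact lemB Ψ hΨ x₀ (himm x₀) γ hγ0 hγlip L hLpos hΓd hlip1
  set n : EuclideanSpace ℝ (Fin D) := ‖v - p‖⁻¹ • (v - p) with hndef
  have hn : ‖n‖ = 1 := by
    rw [hndef, norm_smul, norm_inv, norm_norm, inv_mul_cancel₀ hδ]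
  have hvpT : v - p ∈ Tᗮ := Submodule.sub_starProjection_mem_orthogonal (K := T) v
  have hnT : n ∈ Tᗮ := Submodule.smul_mem _ _ hvpT
  have hen : ⟪deriv (Ψ ∘ γ) 0, n⟫ = 0 := hnT _ heT
  have hkey := lemA κ L hκ hL0 hκL (Ψ ∘ γ) hΓd hunit hacc n hn hen
  have hΓLv : (Ψ ∘ γ) L - (Ψ ∘ γ) 0 = v := by
    simp only [Function.comp_apply, hγ0]
    rw [hγL]
  rw [hΓLv] at hkey
  have hvn : ⟪v, n⟫ = ‖v - p‖ := by
    rw [hndef, real_inner_smul_right]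
    have h1 : ⟪v, v - p⟫ = ⟪v - p, v - p⟫ + ⟪p, v - p⟫ := by
      rw [← inner_add_left]
      norm_num
    have h2 : ⟪p, v - p⟫ = 0 := by
      rw [real_inner_comm]
      exact Submodule.starProjection_inner_eq_zero (K := T) v p (by rw [hpdef]; exact (T.orthogonalProjectionOnto v).2)
    rw [h1, h2, real_inner_self_eq_norm_sq]
    rw [add_zero]
    rw [sq]
    rw [inv_mul_cancel_left₀ hδ]
  rw [hvn] at hkey
  exact hkey
end
end

section
/- In the setting of a local fiber decomposition: let Ψ : 𝕄 → ℝ^D be an isometric C² immersion of a compact manifold with curvature bound κ_max, let x ∈ ℝ^D, r ≤ 1/(4κ_max), and let U₁, U₂ be two distinct maximal path-connected components of Ψ^{-1}(Ψ(𝕄) ∩ B(x,r)). Then for any x₁ ∈ U₁ and x₂ ∈ U₂, the geodesic distance satisfies d_𝕄(x₁, x₂) ≥ 1/κ_max. -/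
open Set Metric

local notation "⟪" a ", " b "⟫" => @inner ℝ _ _ a b

lemma stay_in_ball {D : ℕ} (c : ℝ → EuclideanSpace ℝ (Fin D)) (x : EuclideanSpace ℝ (Fin D))
    (κ r L : ℝ) (hκ : 0 < κ) (hr0 : 0 < r) (hr : r ≤ 1/(4*κ)) (hL0 : 0 ≤ L) (hL : L < 1/κ)
    (hc : ContDiff ℝ 2 c)
    (hspeed : ∀ t ∈ Icc 0 L, ‖deriv c t‖ = 1)
    (hacc : ∀ t ∈ Icc 0 L, ‖deriv (deriv c) t‖ ≤ κ)
    (h0 : dist (c 0) x ≤ r) (hl : dist (c L) x ≤ r) :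
    ∀ t ∈ Icc 0 L, dist (c t) x ≤ r := by
  have hdc : Differentiable ℝ c := hc.differentiable two_ne_zero
  have hc2 : ContDiff ℝ (1 + 1) c := by exact_mod_cast hc
  have hdc' : Differentiable ℝ (deriv c) :=
    ((contDiff_succ_iff_deriv.mp hc2).2.2).differentiable one_ne_zero
  set f : ℝ → ℝ := fun t => ⟪c t - x, c t - x⟫ with hf_def
  have hg : ∀ t, HasDerivAt (fun s => c s - x) (deriv c t) t :=
    fun t => ((hdc t).hasDerivAt).sub_const x
  have hf1 : ∀ t, HasDerivAt f (2 * ⟪deriv c t, c t - x⟫) t := by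
    intro t
    have := (hg t).inner ℝ (hg t)
    refine this.congr_deriv ?_
    rw [real_inner_comm]; ring
  have hf1' : deriv f = fun t => 2 * ⟪deriv c t, c t - x⟫ := funext fun t => (hf1 t).deriv
  have hf2 : ∀ t, HasDerivAt (deriv f)
      (2 * (⟪deriv c t, deriv c t⟫ + ⟪deriv (deriv c) t, c t - x⟫)) t := by
    intro t
    rw [hf1']
    exact (((hdc' t).hasDerivAt).inner ℝ (hg t)).const_mul 2
  -- Lipschitz bound on [0, L]
  have hlip : ∀ t ∈ Icc 0 L, ∀ s ∈ Icc 0 L, ‖c t - c s‖ ≤ 1 * ‖t - s‖ := by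
    intro t ht s hs
    exact (convex_Icc 0 L).norm_image_sub_le_of_norm_deriv_le
      (fun u _ => hdc u) (fun u hu => le_of_eq (hspeed u hu)) hs ht
  have hdist : ∀ t ∈ Icc 0 L, ‖c t - x‖ ≤ r + L / 2 := by
    intro t ht
    rcases le_or_gt t (L / 2) with h | h
    · calc ‖c t - x‖ ≤ ‖c t - c 0‖ + ‖c 0 - x‖ := norm_sub_le_norm_sub_add_norm_sub _ _ _
        _ ≤ 1 * ‖t - 0‖ + r := by
            gcongr
            · exact hlip t ht 0 (left_mem_Icc.mpr hL0)
            · rw [← dist_eq_norm]; exact h0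
        _ ≤ r + L / 2 := by
            rw [sub_zero, one_mul, Real.norm_eq_abs, abs_of_nonneg ht.1]; linarith
    · calc ‖c t - x‖ ≤ ‖c t - c L‖ + ‖c L - x‖ := norm_sub_le_norm_sub_add_norm_sub _ _ _
        _ ≤ 1 * ‖t - L‖ + r := by
            gcongr
            · exact hlip t ht L (right_mem_Icc.mpr hL0)
            · rw [← dist_eq_norm]; exact hl
        _ ≤ r + L / 2 := by
            rw [one_mul, Real.norm_eq_abs, abs_of_nonpos (by linarith [ht.2])]
            linarith
  have hκr : κ * r ≤ 1 / 4 := by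
    rw [le_div_iff₀ (by positivity)] at hr
    nlinarith
  have hκL : κ * L < 1 := by
    rw [lt_div_iff₀ hκ] at hL
    nlinarith
  -- convexity of f on [0, L]
  have hconv : ConvexOn ℝ (Icc 0 L) f := by
    apply convexOn_of_deriv2_nonneg (convex_Icc 0 L)
    · exact (Continuous.inner (hdc.continuous.sub continuous_const)
        (hdc.continuous.sub continuous_const)).continuousOn
    · exact fun t _ => ((hf1 t).differentiableAt).differentiableWithinAt
    · exact fun t _ => ((hf2 t).differentiableAt).differentiableWithinAt
    · intro t ht
      rw [interior_Icc] at ht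
      have ht' : t ∈ Icc 0 L := Ioo_subset_Icc_self ht
      have h2 : deriv^[2] f t = 2 * (⟪deriv c t, deriv c t⟫ + ⟪deriv (deriv c) t, c t - x⟫) := by
        simp only [Function.iterate_succ, Function.iterate_zero, Function.comp_apply, id]
        exact (hf2 t).deriv
      rw [h2]
      have hinner : |⟪deriv (deriv c) t, c t - x⟫| ≤ κ * (r + L / 2) := by
        calc |⟪deriv (deriv c) t, c t - x⟫| ≤ ‖deriv (deriv c) t‖ * ‖c t - x‖ :=
              abs_real_inner_le_norm _ _
          _ ≤ κ * (r + L / 2) := by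
              apply mul_le_mul (hacc t ht') (hdist t ht') (norm_nonneg _) hκ.le
      have hspd : ⟪deriv c t, deriv c t⟫ = 1 := by
        rw [real_inner_self_eq_norm_sq, hspeed t ht']; norm_num
      rw [hspd]
      have := abs_le.mp hinner
      nlinarith
  intro t ht
  have hseg : t ∈ segment ℝ (0 : ℝ) L := by rwa [segment_eq_Icc hL0]
  have hmax := hconv.le_on_segment (left_mem_Icc.mpr hL0) (right_mem_Icc.mpr hL0) hseg
  have hfle : f t ≤ r ^ 2 := by
    refine hmax.trans (max_le ?_ ?_) <;>
      · rw [hf_def]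
        simp only [real_inner_self_eq_norm_sq]
        rw [← dist_eq_norm]
        first
          | nlinarith [dist_nonneg (x := c 0) (y := x)]
          | nlinarith [dist_nonneg (x := c L) (y := x)]
  rw [hf_def] at hfle
  simp only [real_inner_self_eq_norm_sq, ← dist_eq_norm] at hfle
  nlinarith [dist_nonneg (x := c t) (y := x)]

open scoped Manifold

/-- Distinct maximal path-connected components of a local fiber `Ψ⁻¹(Ψ(𝕄) ∩ B(x,r))`,
`r ≤ 1/(4κ)`, are at geodesic distance at least `1/κ` from one another, for an isometric
`C²` immersion `Ψ` of a compact manifold with second fundamental form bounded by `κ`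
(encoded through unit-speed minimizing geodesics). -/
theorem stmt_10 {d D : ℕ} {M : Type*} [MetricSpace M]
    [ChartedSpace (EuclideanSpace ℝ (Fin d)) M]
    [IsManifold (𝓡 d) (⊤ : ℕ∞) M] [CompactSpace M]
    (κ : ℝ) (hκ : 0 < κ)
    (Ψ : M → EuclideanSpace ℝ (Fin D))
    (hΨ : ContMDiff (𝓡 d) 𝓘(ℝ, EuclideanSpace ℝ (Fin D)) 2 Ψ)
    (himm : ∀ p : M,
      Function.Injective (mfderiv (𝓡 d) 𝓘(ℝ, EuclideanSpace ℝ (Fin D)) Ψ p))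
    (hgeo : ∀ x y : M, ∃ γ : ℝ → M,
      γ 0 = x ∧ γ (dist x y) = y ∧ LipschitzWith 1 γ ∧
      ContDiff ℝ 2 (Ψ ∘ γ) ∧
      (∀ t ∈ Set.Icc 0 (dist x y), ‖deriv (Ψ ∘ γ) t‖ = 1) ∧
      (∀ t ∈ Set.Icc 0 (dist x y), ‖deriv (deriv (Ψ ∘ γ)) t‖ ≤ κ))
    (x : EuclideanSpace ℝ (Fin D)) (r : ℝ) (hr0 : 0 < r) (hr : r ≤ 1 / (4 * κ))
    (U₁ U₂ : Set M)
    (hU₁ : U₁ ⊆ Ψ ⁻¹' (Ψ '' Set.univ ∩ Metric.closedBall x r))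
    (hU₂ : U₂ ⊆ Ψ ⁻¹' (Ψ '' Set.univ ∩ Metric.closedBall x r))
    (hpc₁ : IsPathConnected U₁) (hpc₂ : IsPathConnected U₂)
    (hmax₁ : ∀ V : Set M, IsPathConnected V → U₁ ⊆ V →
      V ⊆ Ψ ⁻¹' (Ψ '' Set.univ ∩ Metric.closedBall x r) → V = U₁)
    (hmax₂ : ∀ V : Set M, IsPathConnected V → U₂ ⊆ V →
      V ⊆ Ψ ⁻¹' (Ψ '' Set.univ ∩ Metric.closedBall x r) → V = U₂)
    (hne : U₁ ≠ U₂) :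
    ∀ x₁ ∈ U₁, ∀ x₂ ∈ U₂, 1 / κ ≤ dist x₁ x₂ := by
  intro x₁ hx₁ x₂ hx₂
  by_contra hlt
  push_neg at hlt
  obtain ⟨γ, hγ0, hγL, hγlip, hcsm, hspeed, hacc⟩ := hgeo x₁ x₂
  set L := dist x₁ x₂ with hLdef
  have hL0 : 0 ≤ L := dist_nonneg
  have hball : ∀ t ∈ Set.Icc 0 L, dist ((Ψ ∘ γ) t) x ≤ r :=
    stay_in_ball (Ψ ∘ γ) x κ r L hκ hr0 hr hL0 hlt hcsm hspeed hacc
      (by rw [Function.comp_apply, hγ0]; exact Metric.mem_closedBall.mp (hU₁ hx₁).2)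
      (by rw [Function.comp_apply, hγL]; exact Metric.mem_closedBall.mp (hU₂ hx₂).2)
  set V := U₁ ∪ (γ '' Set.Icc 0 L ∪ U₂) with hVdef
  have hγcont : Continuous γ := hγlip.continuous
  have hA : IsPathConnected (γ '' Set.Icc 0 L) :=
    ((convex_Icc 0 L).isPathConnected (Set.nonempty_Icc.mpr hL0)).image hγcont
  have h0mem : γ 0 ∈ γ '' Set.Icc 0 L := ⟨0, Set.left_mem_Icc.mpr hL0, rfl⟩
  have hLmem : γ L ∈ γ '' Set.Icc 0 L := ⟨L, Set.right_mem_Icc.mpr hL0, rfl⟩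
  have hAU : IsPathConnected (γ '' Set.Icc 0 L ∪ U₂) :=
    hA.union hpc₂ ⟨x₂, by rw [← hγL]; exact hLmem, hx₂⟩
  have hVpc : IsPathConnected V := hpc₁.union hAU ⟨x₁, hx₁, Or.inl (by rw [← hγ0]; exact h0mem)⟩
  have hVsub : V ⊆ Ψ ⁻¹' (Ψ '' Set.univ ∩ Metric.closedBall x r) := by
    rintro y (hy | ⟨t, ht, rfl⟩ | hy)
    · exact hU₁ hy
    · exact ⟨⟨γ t, Set.mem_univ _, rfl⟩, Metric.mem_closedBall.mpr (hball t ht)⟩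
    · exact hU₂ hy
  have h1 : V = U₁ := hmax₁ V hVpc Set.subset_union_left hVsub
  have h2 : V = U₂ := hmax₂ V hVpc (fun y hy => Or.inr (Or.inr hy)) hVsub
  exact hne (h1.symm.trans h2)
end

section
/- Let V, W ∈ ℝ^{D×d} be full-rank matrices with ‖W − V‖_op ≤ δ, ‖(VᵀV)^{-1}‖_op ≤ 2, and columns of norm at most 1 + 1/(4d) for V and W. Then there is a numerical constant C (independent of D, d, δ) such that the corresponding orthogonal projections onto the column spans satisfy ‖W(WᵀW)^{-1}Wᵀ − V(VᵀV)^{-1}Vᵀ‖_op ≤ C√d · δ, provided δ ≤ 1/(8√d). -/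
open Matrix

noncomputable section

/-- The operator (spectral) norm of a rectangular real matrix, viewed as a linear map
between Euclidean spaces. -/
def opNorm {m n : ℕ} (A : Matrix (Fin m) (Fin n) ℝ) : ℝ :=
  ‖LinearMap.toContinuousLinearMap (Matrix.toEuclideanLin A)‖

open scoped Matrix.Norms.L2Operator

lemma aux_opNorm_eq {m n : ℕ} (A : Matrix (Fin m) (Fin n) ℝ) : opNorm A = ‖A‖ := rfl

lemma aux_norm_transpose {m n : ℕ} (A : Matrix (Fin m) (Fin n) ℝ) : ‖Aᵀ‖ = ‖A‖ := by
  have h : Aᵀ = Aᴴ := by ext i j; simp [Matrix.conjTranspose]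
  rw [h, Matrix.l2_opNorm_conjTranspose]

lemma aux_norm_sq {m n : ℕ} (A : Matrix (Fin m) (Fin n) ℝ) : ‖Aᵀ * A‖ = ‖A‖ * ‖A‖ := by
  have h : Aᵀ = Aᴴ := by ext i j; simp [Matrix.conjTranspose]
  rw [h, Matrix.l2_opNorm_conjTranspose_mul_self]

lemma aux_col_bound {m n : ℕ} (A : Matrix (Fin m) (Fin n) ℝ) (c : ℝ) (hc : 0 ≤ c)
    (h : ∀ j, Real.sqrt (∑ i, A i j ^ 2) ≤ c) : ‖A‖ ≤ Real.sqrt n * c := by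
  rw [Matrix.l2_opNorm_def]
  apply ContinuousLinearMap.opNorm_le_bound _ (by positivity)
  intro x
  set colE : Fin n → EuclideanSpace ℝ (Fin m) :=
    fun j => (WithLp.equiv 2 (Fin m → ℝ)).symm (fun i => A i j) with hcol
  have hdecomp : ((Matrix.toEuclideanLin.trans LinearMap.toContinuousLinearMap) A) x
      = ∑ j, x j • colE j := by
    ext i
    simp only [LinearEquiv.trans_apply, LinearMap.coe_toContinuousLinearMap',
      Matrix.toEuclideanLin_apply, hcol]
    rw [show (∑ j, x j • colE j) i = ∑ j, (x j • colE j) i from by rw [WithLp.ofLp_sum]; exact Finset.sum_apply i Finset.univ _]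
    simp [Matrix.mulVec, dotProduct, hcol, mul_comm]
  rw [hdecomp]
  have hcolnorm : ∀ j, ‖colE j‖ ≤ c := by
    intro j
    rw [EuclideanSpace.norm_eq]
    simpa [sq_abs, hcol] using h j
  have hxnorm : ‖x‖ = Real.sqrt (∑ j, (x j) ^ 2) := by
    rw [EuclideanSpace.norm_eq]; simp [sq_abs]
  have h1 : (∑ j, |x j|) ^ 2 ≤ (n : ℝ) * ∑ j, (x j) ^ 2 := by
    simpa [sq_abs] using sq_sum_le_card_mul_sum_sq (s := Finset.univ) (f := fun j => |x j|)
  have h2 : (∑ j, |x j|) ≤ Real.sqrt n * ‖x‖ := by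
    rw [hxnorm, ← Real.sqrt_mul (by positivity)]
    have := Real.sqrt_le_sqrt h1
    rwa [Real.sqrt_sq (by positivity)] at this
  calc ‖∑ j, x j • colE j‖ ≤ ∑ j, ‖x j • colE j‖ := norm_sum_le _ _
    _ = ∑ j, |x j| * ‖colE j‖ := by simp [norm_smul]
    _ ≤ ∑ j, |x j| * c := Finset.sum_le_sum fun j _ =>
        mul_le_mul_of_nonneg_left (hcolnorm j) (abs_nonneg _)
    _ = (∑ j, |x j|) * c := by rw [Finset.sum_mul]
    _ ≤ (Real.sqrt n * ‖x‖) * c := mul_le_mul_of_nonneg_right h2 hc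
    _ = Real.sqrt n * c * ‖x‖ := by ring

/-- The complementary projection `1 - V(VᵀV)⁻¹Vᵀ` has norm at most 1. -/
lemma aux_compl_proj_norm {D d : ℕ} (V : Matrix (Fin D) (Fin d) ℝ)
    (hu : IsUnit (Vᵀ * V)) : ‖(1 : Matrix (Fin D) (Fin D) ℝ) - V * (Vᵀ * V)⁻¹ * Vᵀ‖ ≤ 1 := by
  have hdet : IsUnit (Vᵀ * V).det := (Matrix.isUnit_iff_isUnit_det _).mp hu
  have hGi : (Vᵀ * V)⁻¹ * (Vᵀ * V) = 1 := Matrix.nonsing_inv_mul _ hdet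
  have hGsymm : ((Vᵀ * V)⁻¹)ᵀ = (Vᵀ * V)⁻¹ := by
    rw [Matrix.transpose_nonsing_inv]
    congr 1
    rw [Matrix.transpose_mul, Matrix.transpose_transpose]
  obtain ⟨P, hP⟩ : ∃ P, P = V * (Vᵀ * V)⁻¹ * Vᵀ := ⟨_, rfl⟩
  rw [← hP]
  have hPsymm : Pᵀ = P := by
    rw [hP, Matrix.transpose_mul, Matrix.transpose_mul, Matrix.transpose_transpose, hGsymm,
      Matrix.mul_assoc]
  have hPP : P * P = P := by
    rw [hP]
    calc (V * (Vᵀ * V)⁻¹ * Vᵀ) * (V * (Vᵀ * V)⁻¹ * Vᵀ)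
        = V * (((Vᵀ * V)⁻¹ * (Vᵀ * V)) * ((Vᵀ * V)⁻¹ * Vᵀ)) := by
          simp only [Matrix.mul_assoc]
      _ = V * (Vᵀ * V)⁻¹ * Vᵀ := by rw [hGi, Matrix.one_mul, Matrix.mul_assoc]
  obtain ⟨Q, hQ⟩ : ∃ Q, Q = (1 : Matrix (Fin D) (Fin D) ℝ) - P := ⟨_, rfl⟩
  rw [← hQ]
  have hQsymm : Qᵀ = Q := by rw [hQ, Matrix.transpose_sub, Matrix.transpose_one, hPsymm]
  have hQQ : Q * Q = Q := by
    rw [hQ]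
    simp only [Matrix.sub_mul, Matrix.mul_sub, Matrix.one_mul, Matrix.mul_one, hPP]
    abel
  have key : ‖Q‖ * ‖Q‖ = ‖Q‖ := by
    rw [← aux_norm_sq Q, hQsymm, hQQ]
  nlinarith [norm_nonneg Q]

set_option maxHeartbeats 1600000 in
/-- Stability of the orthogonal projection `V ↦ V(VᵀV)⁻¹Vᵀ` onto the column span:
there is a numerical constant `C` such that for full-rank `V, W` with
`‖W - V‖_op ≤ δ ≤ 1/(8√d)`, `‖(VᵀV)⁻¹‖_op ≤ 2` and columns of norm at most `1 + 1/(4d)`,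
one has `‖P_W - P_V‖_op ≤ C √d δ`. -/
theorem stmt_17 :
    ∃ C : ℝ, 0 < C ∧
      ∀ (D d : ℕ), 0 < d →
        ∀ (V W : Matrix (Fin D) (Fin d) ℝ) (δ : ℝ), 0 ≤ δ →
          δ ≤ 1 / (8 * Real.sqrt d) →
          IsUnit (Vᵀ * V) → IsUnit (Wᵀ * W) →
          opNorm (W - V) ≤ δ →
          opNorm ((Vᵀ * V)⁻¹) ≤ 2 →
          (∀ j, Real.sqrt (∑ i, V i j ^ 2) ≤ 1 + 1 / (4 * d)) →
          (∀ j, Real.sqrt (∑ i, W i j ^ 2) ≤ 1 + 1 / (4 * d)) →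
          opNorm (W * (Wᵀ * W)⁻¹ * Wᵀ - V * (Vᵀ * V)⁻¹ * Vᵀ) ≤ C * Real.sqrt d * δ := by
  refine ⟨4, by norm_num, ?_⟩
  intro D d hd V W δ hδ0 hδ hVu hWu hWV hVinv hVcol hWcol
  rw [aux_opNorm_eq] at hWV hVinv ⊢
  have hPcompl : ‖(1 : Matrix (Fin D) (Fin D) ℝ) - V * (Vᵀ * V)⁻¹ * Vᵀ‖ ≤ 1 :=
    aux_compl_proj_norm V hVu
  have hQcompl : ‖(1 : Matrix (Fin D) (Fin D) ℝ) - W * (Wᵀ * W)⁻¹ * Wᵀ‖ ≤ 1 :=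
    aux_compl_proj_norm W hWu
  have hGdet : IsUnit (Vᵀ * V).det := (Matrix.isUnit_iff_isUnit_det _).mp hVu
  have hHdet : IsUnit (Wᵀ * W).det := (Matrix.isUnit_iff_isUnit_det _).mp hWu
  have hGsymm0 : ((Vᵀ * V)⁻¹)ᵀ = (Vᵀ * V)⁻¹ := by
    rw [Matrix.transpose_nonsing_inv]
    congr 1
    rw [Matrix.transpose_mul, Matrix.transpose_transpose]
  have hHsymm0 : ((Wᵀ * W)⁻¹)ᵀ = (Wᵀ * W)⁻¹ := by
    rw [Matrix.transpose_nonsing_inv]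
    congr 1
    rw [Matrix.transpose_mul, Matrix.transpose_transpose]
  -- abstract the Gram matrices and their inverses
  obtain ⟨G, hG⟩ : ∃ G, G = Vᵀ * V := ⟨_, rfl⟩
  obtain ⟨H, hH⟩ : ∃ H, H = Wᵀ * W := ⟨_, rfl⟩
  obtain ⟨Gi, hGidef⟩ : ∃ Gi, Gi = (Vᵀ * V)⁻¹ := ⟨_, rfl⟩
  obtain ⟨Hi, hHidef⟩ : ∃ Hi, Hi = (Wᵀ * W)⁻¹ := ⟨_, rfl⟩
  rw [← hGidef] at hVinv hPcompl ⊢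
  rw [← hHidef] at hQcompl ⊢
  have hGi : Gi * G = 1 := by rw [hGidef, hG]; exact Matrix.nonsing_inv_mul _ hGdet
  have hGi' : G * Gi = 1 := by rw [hGidef, hG]; exact Matrix.mul_nonsing_inv _ hGdet
  have hHi : Hi * H = 1 := by rw [hHidef, hH]; exact Matrix.nonsing_inv_mul _ hHdet
  have hHi' : H * Hi = 1 := by rw [hHidef, hH]; exact Matrix.mul_nonsing_inv _ hHdet
  have hGsymm : Giᵀ = Gi := by rw [hGidef]; exact hGsymm0
  have hHsymm : Hiᵀ = Hi := by rw [hHidef]; exact hHsymm0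
  -- basic numeric facts
  have hd1 : (1 : ℝ) ≤ d := by exact_mod_cast hd
  have hsd1 : (1 : ℝ) ≤ Real.sqrt d := by
    rw [show (1 : ℝ) = Real.sqrt 1 by simp]
    exact Real.sqrt_le_sqrt hd1
  have hsd0 : (0 : ℝ) < Real.sqrt d := lt_of_lt_of_le one_pos hsd1
  have hδd : Real.sqrt d * δ ≤ 1 / 8 := by
    have h := mul_le_mul_of_nonneg_left hδ hsd0.le
    calc Real.sqrt d * δ ≤ Real.sqrt d * (1 / (8 * Real.sqrt d)) := h
      _ = 1 / 8 := by field_simp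
  -- column-norm bounds
  have hcc : (1 : ℝ) + 1 / (4 * d) ≤ 5 / 4 := by
    have : (1 : ℝ) / (4 * d) ≤ 1 / 4 := by
      rw [div_le_div_iff₀ (by positivity) (by norm_num)]
      nlinarith
    linarith
  have hVn : ‖V‖ ≤ Real.sqrt d * (5 / 4) := by
    refine le_trans (aux_col_bound V (1 + 1 / (4 * d)) (by positivity) hVcol) ?_
    exact mul_le_mul_of_nonneg_left hcc (Real.sqrt_nonneg _)
  have hWn : ‖W‖ ≤ Real.sqrt d * (5 / 4) := by
    refine le_trans (aux_col_bound W (1 + 1 / (4 * d)) (by positivity) hWcol) ?_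
    exact mul_le_mul_of_nonneg_left hcc (Real.sqrt_nonneg _)
  -- bound on ‖H - G‖
  have hEdecomp : H - G = Wᵀ * (W - V) + (W - V)ᵀ * V := by
    rw [Matrix.transpose_sub, Matrix.mul_sub, Matrix.sub_mul, hH, hG]
    abel
  have hE : ‖H - G‖ ≤ 5 / 16 := by
    have h1 : ‖Wᵀ * (W - V)‖ ≤ (Real.sqrt d * (5 / 4)) * δ := by
      refine le_trans (Matrix.l2_opNorm_mul _ _) ?_
      rw [aux_norm_transpose]
      exact mul_le_mul hWn hWV (norm_nonneg _) (by positivity)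
    have h2 : ‖(W - V)ᵀ * V‖ ≤ δ * (Real.sqrt d * (5 / 4)) := by
      refine le_trans (Matrix.l2_opNorm_mul _ _) ?_
      rw [aux_norm_transpose]
      exact mul_le_mul hWV hVn (norm_nonneg _) hδ0
    calc ‖H - G‖ ≤ ‖Wᵀ * (W - V)‖ + ‖(W - V)ᵀ * V‖ := by
          rw [hEdecomp]; exact norm_add_le _ _
      _ ≤ (Real.sqrt d * (5 / 4)) * δ + δ * (Real.sqrt d * (5 / 4)) := add_le_add h1 h2
      _ = (5 / 2) * (Real.sqrt d * δ) := by ring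
      _ ≤ (5 / 2) * (1 / 8) := by nlinarith
      _ = 5 / 16 := by norm_num
  -- bound on ‖Hi‖
  have hkey : Hi * (H - G) * Gi = Gi - Hi := by
    calc Hi * (H - G) * Gi = (Hi * H) * Gi - Hi * (G * Gi) := by
          simp only [Matrix.mul_sub, Matrix.sub_mul, Matrix.mul_assoc]
      _ = Gi - Hi := by rw [hHi, hGi', Matrix.one_mul, Matrix.mul_one]
  have hHinvEq : Hi = Gi - Hi * (H - G) * Gi := by rw [hkey]; abel
  have hHinv : ‖Hi‖ ≤ 16 / 3 := by
    have hmul : ‖Hi * (H - G) * Gi‖ ≤ ‖Hi‖ * (5 / 16) * 2 := by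
      calc ‖Hi * (H - G) * Gi‖ ≤ ‖Hi * (H - G)‖ * ‖Gi‖ := Matrix.l2_opNorm_mul _ _
        _ ≤ (‖Hi‖ * ‖H - G‖) * ‖Gi‖ :=
            mul_le_mul_of_nonneg_right (Matrix.l2_opNorm_mul _ _) (norm_nonneg _)
        _ ≤ ‖Hi‖ * (5 / 16) * 2 := by
            have h1 := norm_nonneg Hi
            have h2 := norm_nonneg (H - G)
            have h3 := norm_nonneg Gi
            have e1 : ‖Hi‖ * ‖H - G‖ ≤ ‖Hi‖ * (5 / 16) := mul_le_mul_of_nonneg_left hE h1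
            exact mul_le_mul e1 hVinv h3 (by positivity)
    have hle : ‖Hi‖ ≤ ‖Gi‖ + ‖Hi‖ * (5 / 16) * 2 := by
      calc ‖Hi‖ = ‖Gi - Hi * (H - G) * Gi‖ := by rw [← hHinvEq]
        _ ≤ ‖Gi‖ + ‖Hi * (H - G) * Gi‖ := norm_sub_le _ _
        _ ≤ ‖Gi‖ + ‖Hi‖ * (5 / 16) * 2 := by linarith
    linarith
  -- bounds on pseudoinverse factors
  have hVG : ‖V * Gi‖ ≤ 3 / 2 := by
    have hsq : ‖V * Gi‖ * ‖V * Gi‖ = ‖Gi‖ := by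
      rw [← aux_norm_sq (V * Gi)]
      congr 1
      rw [Matrix.transpose_mul, hGsymm]
      calc Gi * Vᵀ * (V * Gi) = Gi * ((Vᵀ * V) * Gi) := by
            simp only [Matrix.mul_assoc]
        _ = Gi := by rw [← hG, hGi', Matrix.mul_one]
    nlinarith [norm_nonneg (V * Gi)]
  have hWH : ‖W * Hi‖ ≤ 7 / 3 := by
    have hsq : ‖W * Hi‖ * ‖W * Hi‖ = ‖Hi‖ := by
      rw [← aux_norm_sq (W * Hi)]
      congr 1
      rw [Matrix.transpose_mul, hHsymm]
      calc Hi * Wᵀ * (W * Hi) = Hi * ((Wᵀ * W) * Hi) := by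
            simp only [Matrix.mul_assoc]
        _ = Hi := by rw [← hH, hHi', Matrix.mul_one]
    nlinarith [norm_nonneg (W * Hi)]
  -- the projections
  obtain ⟨P, hP⟩ : ∃ P, P = V * Gi * Vᵀ := ⟨_, rfl⟩
  obtain ⟨Q, hQ⟩ : ∃ Q, Q = W * Hi * Wᵀ := ⟨_, rfl⟩
  rw [← hP] at hPcompl ⊢
  rw [← hQ] at hQcompl ⊢
  -- splitting
  have hsplit : Q - P = (1 - P) * Q - P * (1 - Q) := by
    rw [Matrix.sub_mul, Matrix.mul_sub, Matrix.one_mul, Matrix.mul_one]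
    abel
  -- term 1 : (1 - P) * Q = (1 - P) * ((W - V) * (Hi * Wᵀ))
  have hPV : P * V = V := by
    rw [hP]
    calc (V * Gi * Vᵀ) * V = V * (Gi * (Vᵀ * V)) := by simp only [Matrix.mul_assoc]
      _ = V := by rw [← hG, hGi, Matrix.mul_one]
  have h1PV : ((1 : Matrix (Fin D) (Fin D) ℝ) - P) * V = 0 := by
    rw [Matrix.sub_mul, Matrix.one_mul, hPV, sub_self]
  have hterm1eq : (1 - P) * Q = (1 - P) * ((W - V) * (Hi * Wᵀ)) := by
    have hexp : (1 - P) * ((W - V) * (Hi * Wᵀ)) =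
        (1 - P) * (W * (Hi * Wᵀ)) - ((1 - P) * V) * (Hi * Wᵀ) := by
      simp only [Matrix.sub_mul, Matrix.mul_sub, Matrix.one_mul, Matrix.mul_assoc]
    rw [hexp, h1PV, Matrix.zero_mul, sub_zero, hQ, Matrix.mul_assoc]
  have hHW : ‖Hi * Wᵀ‖ ≤ 7 / 3 := by
    have ht : (Hi * Wᵀ)ᵀ = W * Hi := by
      rw [Matrix.transpose_mul, Matrix.transpose_transpose, hHsymm]
    calc ‖Hi * Wᵀ‖ = ‖(Hi * Wᵀ)ᵀ‖ := (aux_norm_transpose _).symm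
      _ = ‖W * Hi‖ := by rw [ht]
      _ ≤ 7 / 3 := hWH
  have hterm1 : ‖(1 - P) * Q‖ ≤ (7 / 3) * δ := by
    rw [hterm1eq]
    calc ‖(1 - P) * ((W - V) * (Hi * Wᵀ))‖
        ≤ ‖(1 : Matrix (Fin D) (Fin D) ℝ) - P‖ * ‖(W - V) * (Hi * Wᵀ)‖ :=
          Matrix.l2_opNorm_mul _ _
      _ ≤ 1 * (‖W - V‖ * ‖Hi * Wᵀ‖) := by
          have h2 := Matrix.l2_opNorm_mul (W - V) (Hi * Wᵀ)
          exact mul_le_mul hPcompl h2 (norm_nonneg _) zero_le_one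
      _ ≤ 1 * (δ * (7 / 3)) := by
          have := mul_le_mul hWV hHW (norm_nonneg _) hδ0
          linarith
      _ = (7 / 3) * δ := by ring
  -- term 2 : P * (1 - Q) = (V * Gi) * ((V - W)ᵀ * (1 - Q))
  have hWQ : Wᵀ * ((1 : Matrix (Fin D) (Fin D) ℝ) - Q) = 0 := by
    have h : Wᵀ * Q = Wᵀ := by
      rw [hQ]
      calc Wᵀ * (W * Hi * Wᵀ) = ((Wᵀ * W) * Hi) * Wᵀ := by simp only [Matrix.mul_assoc]
        _ = Wᵀ := by rw [← hH, hHi', Matrix.one_mul]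
    rw [Matrix.mul_sub, Matrix.mul_one, h, sub_self]
  have hterm2eq : P * (1 - Q) = (V * Gi) * ((V - W)ᵀ * (1 - Q)) := by
    have h1 : (V - W)ᵀ * (1 - Q) = Vᵀ * (1 - Q) - Wᵀ * (1 - Q) := by
      rw [Matrix.transpose_sub, Matrix.sub_mul]
    rw [h1, hWQ, sub_zero, hP, Matrix.mul_assoc, Matrix.mul_assoc]
  have hterm2 : ‖P * (1 - Q)‖ ≤ (3 / 2) * δ := by
    rw [hterm2eq]
    have hVWt : ‖(V - W)ᵀ * (1 - Q)‖ ≤ δ := by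
      calc ‖(V - W)ᵀ * (1 - Q)‖ ≤ ‖(V - W)ᵀ‖ * ‖(1 : Matrix (Fin D) (Fin D) ℝ) - Q‖ :=
            Matrix.l2_opNorm_mul _ _
        _ ≤ δ * 1 := by
            have h1 : ‖(V - W)ᵀ‖ ≤ δ := by
              rw [aux_norm_transpose, show V - W = -(W - V) by abel, norm_neg]; exact hWV
            exact mul_le_mul h1 hQcompl (norm_nonneg _) hδ0
        _ = δ := mul_one δ
    calc ‖(V * Gi) * ((V - W)ᵀ * (1 - Q))‖ ≤ ‖V * Gi‖ * ‖(V - W)ᵀ * (1 - Q)‖ :=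
          Matrix.l2_opNorm_mul _ _
      _ ≤ (3 / 2) * δ := mul_le_mul hVG hVWt (norm_nonneg _) (by norm_num)
  -- conclusion
  calc ‖Q - P‖ = ‖(1 - P) * Q - P * (1 - Q)‖ := by rw [← hsplit]
    _ ≤ ‖(1 - P) * Q‖ + ‖P * (1 - Q)‖ := norm_sub_le _ _
    _ ≤ (7 / 3) * δ + (3 / 2) * δ := add_le_add hterm1 hterm2
    _ ≤ 4 * δ := by linarith
    _ ≤ 4 * Real.sqrt d * δ := by nlinarith
end
end

section
/- Let M ⊆ ℝ^D admit a C² immersion parametrization, let x ∈ M, and let (𝕄, Ψ), (𝕄', Ψ') be two compact C² manifolds with C² immersions onto M (Ψ(𝕄) = Ψ'(𝕄') = M). Then the pushed-forward tangent cones agree: ⋃_{x₀ ∈ Ψ^{-1}(x)} dΨ(x₀)[T_{x₀}𝕄] = ⋃_{x₀' ∈ Ψ'^{-1}(x)} dΨ'(x₀')[T_{x₀'}𝕄']. Moreover this common set equals { v ∈ ℝ^D : for all ε > 0 there exists y ∈ (M ∩ B(x,ε)) \ {x} with ‖ (y−x)/‖y−x‖ − v/‖v‖ ‖ < ε } together with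 0. -/
set_option maxHeartbeats 1000000

open scoped Manifold
open Filter Metric Set Asymptotics Topology Function


lemma aux_hasFDerivAt {d D : ℕ} {M : Type*} [TopologicalSpace M]
    [ChartedSpace (EuclideanSpace ℝ (Fin d)) M]
    [IsManifold (𝓡 d) (⊤ : ℕ∞) M]
    (Ψ : M → EuclideanSpace ℝ (Fin D))
    (hΨ : ContMDiff (𝓡 d) 𝓘(ℝ, EuclideanSpace ℝ (Fin D)) 2 Ψ) (p : M) :
    HasFDerivAt (Ψ ∘ (extChartAt (𝓡 d) p).symm)
      (mfderiv (𝓡 d) 𝓘(ℝ, EuclideanSpace ℝ (Fin D)) Ψ p) (extChartAt (𝓡 d) p p) := by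
  have hmd : MDifferentiableAt (𝓡 d) 𝓘(ℝ, EuclideanSpace ℝ (Fin D)) Ψ p :=
    (hΨ.mdifferentiableAt two_ne_zero)
  have h := hmd.hasMFDerivAt.2
  rw [ModelWithCorners.range_eq_univ] at h; replace h := hasFDerivWithinAt_univ.mp h
  simpa [writtenInExtChartAt, extChartAt_model_space_eq_id, chartAt_self_eq, Function.comp] using h

lemma aux_sup {d D : ℕ} {M : Type*} [TopologicalSpace M]
    [ChartedSpace (EuclideanSpace ℝ (Fin d)) M]
    [IsManifold (𝓡 d) (⊤ : ℕ∞) M] [CompactSpace M]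
    (Ψ : M → EuclideanSpace ℝ (Fin D))
    (hΨ : ContMDiff (𝓡 d) 𝓘(ℝ, EuclideanSpace ℝ (Fin D)) 2 Ψ)
    (himm : ∀ p : M,
      Function.Injective (mfderiv (𝓡 d) 𝓘(ℝ, EuclideanSpace ℝ (Fin D)) Ψ p))
    {Mset : Set (EuclideanSpace ℝ (Fin D))} (hM : Ψ '' Set.univ = Mset)
    {x v : EuclideanSpace ℝ (Fin D)} (hv0 : v ≠ 0)
    (hsec : ∀ ε > 0, ∃ y ∈ Mset ∩ ball x ε, y ≠ x ∧
      ‖‖y - x‖⁻¹ • (y - x) - ‖v‖⁻¹ • v‖ < ε) :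
    ∃ p : M, Ψ p = x ∧
      v ∈ LinearMap.range (mfderiv (𝓡 d) 𝓘(ℝ, EuclideanSpace ℝ (Fin D)) Ψ p).toLinearMap := by
  -- choose a sequence of secant points
  have hpos : ∀ n : ℕ, (0:ℝ) < 1 / (n + 1) := fun n => by positivity
  choose y hyMb hyx hyv using fun n : ℕ => hsec (1 / (n + 1)) (hpos n)
  have hyM : ∀ n, y n ∈ Mset := fun n => (hyMb n).1
  -- lift to the manifold
  have hlift : ∀ n, ∃ pn : M, Ψ pn = y n := by
    intro n
    have : y n ∈ Ψ '' Set.univ := hM ▸ hyM n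
    obtain ⟨pn, -, hpn⟩ := this
    exact ⟨pn, hpn⟩
  choose p hp using hlift
  -- cluster point
  obtain ⟨p₀, hp₀⟩ := exists_clusterPt_of_compactSpace (map p atTop)
  set ℱ : Filter ℕ := atTop ⊓ comap p (𝓝 p₀) with hℱ
  have hne : ℱ.NeBot := by
    have h1 : NeBot (map p (atTop ⊓ comap p (𝓝 p₀))) := by
      rw [Filter.push_pull]
      rwa [ClusterPt, inf_comm] at hp₀
    exact h1.of_map
  have hle1 : ℱ ≤ atTop := inf_le_left
  have htp : Tendsto p ℱ (𝓝 p₀) := tendsto_comap.mono_left inf_le_right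
  -- y tends to x
  have hdist : Tendsto (fun n => dist (y n) x) atTop (𝓝 0) := by
    refine squeeze_zero (fun n => dist_nonneg) (fun n => le_of_lt (mem_ball.1 (hyMb n).2)) ?_
    exact tendsto_one_div_add_atTop_nhds_zero_nat
  have hyx' : Tendsto y atTop (𝓝 x) := tendsto_iff_dist_tendsto_zero.2 hdist
  -- Ψ p₀ = x
  have hΨp₀ : Ψ p₀ = x := by
    have h1 : Tendsto (Ψ ∘ p) ℱ (𝓝 (Ψ p₀)) :=
      (hΨ.continuous.continuousAt.tendsto).comp htp
    have h2 : (Ψ ∘ p) = y := funext hp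
    rw [h2] at h1
    exact tendsto_nhds_unique h1 (hyx'.mono_left hle1)
  -- secant directions tend to v̂
  have hσ : Tendsto (fun n => ‖y n - x‖⁻¹ • (y n - x)) atTop (𝓝 (‖v‖⁻¹ • v)) := by
    rw [tendsto_iff_norm_sub_tendsto_zero]
    refine squeeze_zero (fun n => norm_nonneg _) (fun n => le_of_lt (hyv n)) ?_
    exact tendsto_one_div_add_atTop_nhds_zero_nat
  refine ⟨p₀, hΨp₀, ?_⟩
  -- chart setup
  set Df : EuclideanSpace ℝ (Fin d) →L[ℝ] EuclideanSpace ℝ (Fin D) :=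
    mfderiv (𝓡 d) 𝓘(ℝ, EuclideanSpace ℝ (Fin D)) Ψ p₀ with hDf
  set φ := extChartAt (𝓡 d) p₀ with hφ
  set z₀ : EuclideanSpace ℝ (Fin d) := φ p₀ with hz₀
  set f : EuclideanSpace ℝ (Fin d) → EuclideanSpace ℝ (Fin D) := Ψ ∘ φ.symm with hfdef
  have hf : HasFDerivAt f Df z₀ := aux_hasFDerivAt Ψ hΨ p₀
  have hfz₀ : f z₀ = x := by
    have : φ.symm z₀ = p₀ := (extChartAt (𝓡 d) p₀).left_inv (mem_extChartAt_source p₀)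
    simp only [hfdef, Function.comp_apply, this]
    exact hΨp₀
  set z : ℕ → EuclideanSpace ℝ (Fin d) := fun n => φ (p n) with hzdef
  have hzt : Tendsto z ℱ (𝓝 z₀) := (continuousAt_extChartAt p₀).tendsto.comp htp
  have hsrc : ∀ᶠ n in ℱ, p n ∈ φ.source :=
    htp (extChartAt_source_mem_nhds p₀)
  have hfz : ∀ᶠ n in ℱ, f (z n) = y n := by
    filter_upwards [hsrc] with n hn
    simp only [hfdef, hzdef, Function.comp_apply, φ.left_inv hn]
    exact hp n
  set u : ℕ → EuclideanSpace ℝ (Fin d) := fun n => z n - z₀ with hu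
  -- little-o estimate
  have hlo : (fun n => y n - x - Df (u n)) =o[ℱ] u := by
    have h1 := (hf.isLittleO).comp_tendsto hzt
    refine h1.congr' ?_ (Filter.Eventually.of_forall fun n => rfl)
    filter_upwards [hfz] with n hn
    simp [hn, hfz₀, hu]
  set r : ℕ → EuclideanSpace ℝ (Fin D) := fun n => y n - x - Df (u n) with hr
  -- antilipschitz constant
  obtain ⟨K, hK, hKa⟩ := (LinearMap.injective_iff_antilipschitz
    (Df : EuclideanSpace ℝ (Fin d) →ₗ[ℝ] EuclideanSpace ℝ (Fin D))).1 (himm p₀)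
  set c₀ : ℝ := (K : ℝ) with hc₀
  have hc₀pos : (0:ℝ) < c₀ := hK
  have hanti : ∀ w : EuclideanSpace ℝ (Fin d), ‖w‖ ≤ c₀ * ‖Df w‖ := by
    intro w
    have := hKa.le_mul_dist w 0
    simpa [dist_eq_norm] using this
  -- u n ≠ 0 eventually
  have hu0 : ∀ᶠ n in ℱ, u n ≠ 0 := by
    filter_upwards [hfz] with n hn h0
    have hz0 : z n = z₀ := by rwa [hu, sub_eq_zero] at h0
    exact hyx n (by rw [← hn, hz0, hfz₀])
  -- ratio tends to 0
  have hratio : Tendsto (fun n => ‖r n‖ / ‖u n‖) ℱ (𝓝 0) :=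
    (hlo.norm_norm).tendsto_div_nhds_zero
  -- small remainder eventually
  have hsmall : ∀ᶠ n in ℱ, ‖r n‖ ≤ (2 * c₀)⁻¹ * ‖u n‖ :=
    hlo.def (inv_pos.2 (by linarith))
  -- the range submodule and distance estimate
  set Kset : Submodule ℝ (EuclideanSpace ℝ (Fin D)) := LinearMap.range Df.toLinearMap with hKset
  have hKclosed : IsClosed (Kset : Set (EuclideanSpace ℝ (Fin D))) :=
    Submodule.closed_of_finiteDimensional Kset
  have hest : ∀ᶠ n in ℱ, infDist (‖v‖⁻¹ • v) (Kset : Set (EuclideanSpace ℝ (Fin D))) ≤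
      ‖‖y n - x‖⁻¹ • (y n - x) - ‖v‖⁻¹ • v‖ + (2 * c₀) * (‖r n‖ / ‖u n‖) := by
    filter_upwards [hsmall, hu0] with n hsm hu0n
    have hupos : (0:ℝ) < ‖u n‖ := norm_pos_iff.2 hu0n
    have hDfu : c₀⁻¹ * ‖u n‖ ≤ ‖Df (u n)‖ := by
      rw [inv_mul_le_iff₀ hc₀pos]
      exact hanti (u n)
    have hyd : (2 * c₀)⁻¹ * ‖u n‖ ≤ ‖y n - x‖ := by
      have h1 : ‖Df (u n)‖ ≤ ‖y n - x‖ + ‖r n‖ := by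
        have he : Df (u n) = (y n - x) - r n := (sub_sub_cancel (y n - x) (Df (u n))).symm
        rw [he]
        exact norm_sub_le _ _
      have h2 : c₀⁻¹ * ‖u n‖ - (2 * c₀)⁻¹ * ‖u n‖ = (2 * c₀)⁻¹ * ‖u n‖ := by
        field_simp
        ring
      nlinarith
    have hypos : (0:ℝ) < ‖y n - x‖ :=
      lt_of_lt_of_le (mul_pos (inv_pos.2 (by linarith)) hupos) hyd
    have hmem : ‖y n - x‖⁻¹ • Df (u n) ∈ (Kset : Set (EuclideanSpace ℝ (Fin D))) :=
      Kset.smul_mem _ ⟨u n, rfl⟩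
    have h3 : infDist (‖y n - x‖⁻¹ • (y n - x)) (Kset : Set (EuclideanSpace ℝ (Fin D))) ≤
        ‖y n - x‖⁻¹ * ‖r n‖ := by
      refine le_trans (infDist_le_dist_of_mem hmem) ?_
      rw [dist_eq_norm, ← smul_sub, norm_smul, Real.norm_eq_abs,
        abs_of_pos (inv_pos.2 hypos)]
    have h4 : ‖y n - x‖⁻¹ * ‖r n‖ ≤ (2 * c₀) * (‖r n‖ / ‖u n‖) := by
      rw [div_eq_mul_inv]
      have hinv : ‖y n - x‖⁻¹ ≤ (2 * c₀) * ‖u n‖⁻¹ := by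
        rw [← one_div, div_le_iff₀ hypos]
        have hprod : (2 * c₀) * ‖u n‖⁻¹ * ((2*c₀)⁻¹ * ‖u n‖) = 1 := by
          field_simp
        nlinarith [mul_le_mul_of_nonneg_left hyd
          (le_of_lt (mul_pos (by linarith : (0:ℝ) < 2 * c₀) (inv_pos.2 hupos)))]
      calc ‖y n - x‖⁻¹ * ‖r n‖ ≤ ((2 * c₀) * ‖u n‖⁻¹) * ‖r n‖ :=
            mul_le_mul_of_nonneg_right hinv (norm_nonneg _)
        _ = (2 * c₀) * (‖r n‖ * ‖u n‖⁻¹) := by ring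
    have h5 : dist (‖v‖⁻¹ • v) (‖y n - x‖⁻¹ • (y n - x))
        = ‖‖y n - x‖⁻¹ • (y n - x) - ‖v‖⁻¹ • v‖ := by
      rw [dist_eq_norm, norm_sub_rev]
    calc infDist (‖v‖⁻¹ • v) (Kset : Set (EuclideanSpace ℝ (Fin D)))
        ≤ infDist (‖y n - x‖⁻¹ • (y n - x)) (Kset : Set (EuclideanSpace ℝ (Fin D)))
          + dist (‖v‖⁻¹ • v) (‖y n - x‖⁻¹ • (y n - x)) :=
            infDist_le_infDist_add_dist
      _ ≤ (2 * c₀) * (‖r n‖ / ‖u n‖) + ‖‖y n - x‖⁻¹ • (y n - x) - ‖v‖⁻¹ • v‖ :=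
            add_le_add (h3.trans h4) (le_of_eq h5)
      _ = ‖‖y n - x‖⁻¹ • (y n - x) - ‖v‖⁻¹ • v‖ + (2 * c₀) * (‖r n‖ / ‖u n‖) :=
            add_comm _ _
  -- conclude
  have h1 : Tendsto (fun n => ‖‖y n - x‖⁻¹ • (y n - x) - ‖v‖⁻¹ • v‖) ℱ (𝓝 0) :=
    tendsto_iff_norm_sub_tendsto_zero.1 (hσ.mono_left hle1)
  have hG : Tendsto (fun n => ‖‖y n - x‖⁻¹ • (y n - x) - ‖v‖⁻¹ • v‖
      + (2 * c₀) * (‖r n‖ / ‖u n‖)) ℱ (𝓝 0) := by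
    simpa using h1.add (hratio.const_mul (2 * c₀))
  have hc : infDist (‖v‖⁻¹ • v) (Kset : Set (EuclideanSpace ℝ (Fin D))) ≤ 0 :=
    ge_of_tendsto hG hest
  have hc0 : infDist (‖v‖⁻¹ • v) (Kset : Set (EuclideanSpace ℝ (Fin D))) = 0 :=
    le_antisymm hc infDist_nonneg
  have hmemv : ‖v‖⁻¹ • v ∈ (Kset : Set (EuclideanSpace ℝ (Fin D))) :=
    (hKclosed.mem_iff_infDist_zero ⟨0, Kset.zero_mem⟩).2 hc0
  have hvK : v ∈ Kset := by
    have := Kset.smul_mem ‖v‖ hmemv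
    rwa [smul_inv_smul₀ (norm_ne_zero_iff.2 hv0)] at this
  exact hvK

lemma aux_sub {d D : ℕ} {M : Type*} [TopologicalSpace M]
    [ChartedSpace (EuclideanSpace ℝ (Fin d)) M]
    [IsManifold (𝓡 d) (⊤ : ℕ∞) M]
    (Ψ : M → EuclideanSpace ℝ (Fin D))
    (hΨ : ContMDiff (𝓡 d) 𝓘(ℝ, EuclideanSpace ℝ (Fin D)) 2 Ψ)
    {Mset : Set (EuclideanSpace ℝ (Fin D))} (hM : Ψ '' Set.univ = Mset)
    {x : EuclideanSpace ℝ (Fin D)} (p : M) (hp : Ψ p = x)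
    {v : EuclideanSpace ℝ (Fin D)}
    (hv : v ∈ LinearMap.range (mfderiv (𝓡 d) 𝓘(ℝ, EuclideanSpace ℝ (Fin D)) Ψ p).toLinearMap)
    (hv0 : v ≠ 0) :
    ∀ ε > 0, ∃ y ∈ Mset ∩ ball x ε, y ≠ x ∧ ‖‖y - x‖⁻¹ • (y - x) - ‖v‖⁻¹ • v‖ < ε := by
  have Df : EuclideanSpace ℝ (Fin d) →L[ℝ] EuclideanSpace ℝ (Fin D) :=
    mfderiv (𝓡 d) 𝓘(ℝ, EuclideanSpace ℝ (Fin D)) Ψ p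
  obtain ⟨w₀, hw⟩ := hv
  set Df : EuclideanSpace ℝ (Fin d) →L[ℝ] EuclideanSpace ℝ (Fin D) :=
    mfderiv (𝓡 d) 𝓘(ℝ, EuclideanSpace ℝ (Fin D)) Ψ p with hDf
  set w : EuclideanSpace ℝ (Fin d) := w₀ with hwdef
  have hw : Df w = v := hw
  set φ := extChartAt (𝓡 d) p with hφ
  set z₀ : EuclideanSpace ℝ (Fin d) := φ p with hz₀
  set f : EuclideanSpace ℝ (Fin d) → EuclideanSpace ℝ (Fin D) := Ψ ∘ φ.symm with hfdef
  have hf : HasFDerivAt f Df z₀ := aux_hasFDerivAt Ψ hΨ p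
  have hfz₀ : f z₀ = x := by
    have : φ.symm z₀ = p := (extChartAt (𝓡 d) p).left_inv (mem_extChartAt_source p)
    simp only [hfdef, Function.comp_apply, this]
    exact hp
  set g : ℝ → EuclideanSpace ℝ (Fin D) := fun t => f (z₀ + t • w) with hg
  have hgM : ∀ t, g t ∈ Mset := by
    intro t
    rw [← hM]
    exact ⟨φ.symm (z₀ + t • w), Set.mem_univ _, rfl⟩
  have hco : Tendsto (fun t : ℝ => z₀ + t • w) (𝓝 0) (𝓝 z₀) := by
    have : Continuous fun t : ℝ => z₀ + t • w := by continuity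
    simpa using this.tendsto 0
  have hlo : (fun t : ℝ => g t - x - t • v) =o[𝓝 0] (fun t : ℝ => t) := by
    have h1 := (hf.isLittleO).comp_tendsto hco
    have h2 : (fun t : ℝ => g t - x - t • v) =o[𝓝 0] (fun t : ℝ => t • w) := by
      refine h1.congr (fun t => ?_) (fun t => by simp)
      simp [hg, hfz₀, ← hw, map_smul]
    refine h2.trans_isBigO (isBigO_iff.2 ⟨‖w‖, ?_⟩)
    filter_upwards with t
    simp [norm_smul, mul_comm]
  have hrem : Tendsto (fun t : ℝ => t⁻¹ • (g t - x - t • v)) (𝓝[>] 0) (𝓝 0) := by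
    rw [tendsto_zero_iff_norm_tendsto_zero]
    have := (hlo.norm_norm).tendsto_div_nhds_zero.mono_left
      (nhdsWithin_le_nhds : 𝓝[>] (0:ℝ) ≤ 𝓝 0)
    refine Tendsto.congr' ?_ this
    filter_upwards [self_mem_nhdsWithin] with t (ht : (0:ℝ) < t)
    rw [norm_smul]
    simp [Real.norm_eq_abs, abs_of_pos ht, div_eq_mul_inv, mul_comm]
  set u : ℝ → EuclideanSpace ℝ (Fin D) := fun t => t⁻¹ • (g t - x) with hu
  have huv : Tendsto u (𝓝[>] 0) (𝓝 v) := by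
    have heq : (fun t : ℝ => v + t⁻¹ • (g t - x - t • v)) =ᶠ[𝓝[>] (0:ℝ)] u := by
      filter_upwards [self_mem_nhdsWithin] with t (ht : (0:ℝ) < t)
      rw [hu]
      simp only [smul_sub, smul_smul, inv_mul_cancel₀ ht.ne', one_smul]
      abel
    exact Tendsto.congr' heq (by simpa using tendsto_const_nhds.add hrem)
  -- g t - x = t • u t
  have hgu : ∀ t : ℝ, 0 < t → g t - x = t • u t := by
    intro t ht
    rw [hu, smul_smul, mul_inv_cancel₀ ht.ne', one_smul]
  -- eventually u t ≠ 0
  have hune : ∀ᶠ t in 𝓝[>] (0:ℝ), u t ≠ 0 := by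
    filter_upwards [huv (ball_mem_nhds v (norm_pos_iff.2 hv0))] with t ht h0
    simp [Set.mem_preimage, h0, mem_ball, dist_eq_norm] at ht
  -- eventually g t ≠ x
  have hgx : ∀ᶠ t in 𝓝[>] (0:ℝ), g t ≠ x := by
    filter_upwards [hune, self_mem_nhdsWithin] with t ht (ht' : (0:ℝ) < t) hgt
    apply ht
    have : g t - x = 0 := by rw [hgt]; abel
    rw [hgu t ht'] at this
    exact (smul_eq_zero.1 this).resolve_left (by exact_mod_cast ht'.ne')
  -- g tends to x
  have hgtx : Tendsto g (𝓝[>] (0:ℝ)) (𝓝 x) := by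
    have h1 : Tendsto (fun t : ℝ => g t - x) (𝓝[>] (0:ℝ)) (𝓝 0) := by
      have : Tendsto (fun t : ℝ => t • u t) (𝓝[>] (0:ℝ)) (𝓝 ((0:ℝ) • v)) :=
        Tendsto.smul (tendsto_id.mono_left nhdsWithin_le_nhds) huv
      rw [zero_smul] at this
      refine this.congr' ?_
      filter_upwards [self_mem_nhdsWithin] with t (ht : (0:ℝ) < t)
      exact (hgu t ht).symm
    have := h1.add_const x
    simpa using this
  -- secant direction tends to v/‖v‖
  have hnorm : Tendsto (fun t : ℝ => ‖u t‖⁻¹ • u t) (𝓝[>] (0:ℝ)) (𝓝 (‖v‖⁻¹ • v)) := by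
    have hcont : ContinuousAt (fun z : EuclideanSpace ℝ (Fin D) => ‖z‖⁻¹ • z) v :=
      ((continuous_norm.continuousAt).inv₀ (norm_ne_zero_iff.2 hv0)).smul continuousAt_id
    exact hcont.tendsto.comp huv
  have hsame : ∀ᶠ t in 𝓝[>] (0:ℝ),
      ‖g t - x‖⁻¹ • (g t - x) = ‖u t‖⁻¹ • u t := by
    filter_upwards [self_mem_nhdsWithin] with t (ht : (0:ℝ) < t)
    rw [hgu t ht, norm_smul, Real.norm_eq_abs, abs_of_pos ht, smul_smul, mul_inv,
      mul_comm t⁻¹, mul_assoc, inv_mul_cancel₀ ht.ne', mul_one]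
  have hsec : Tendsto (fun t : ℝ => ‖g t - x‖⁻¹ • (g t - x)) (𝓝[>] (0:ℝ))
      (𝓝 (‖v‖⁻¹ • v)) := Tendsto.congr' (hsame.mono fun t h => h.symm) hnorm
  intro ε hε
  have hball : ∀ᶠ t in 𝓝[>] (0:ℝ), g t ∈ ball x ε :=
    hgtx (ball_mem_nhds x hε)
  have hclose : ∀ᶠ t in 𝓝[>] (0:ℝ), ‖‖g t - x‖⁻¹ • (g t - x) - ‖v‖⁻¹ • v‖ < ε := by
    have := hsec (ball_mem_nhds _ hε)
    filter_upwards [this] with t ht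
    simpa [mem_ball, dist_eq_norm] using ht
  obtain ⟨t, h1, h2, h3⟩ := (hball.and (hgx.and hclose)).exists
  exact ⟨g t, ⟨hgM t, h1⟩, h2, h3⟩


lemma aux_main {d D : ℕ} {M : Type*} [TopologicalSpace M]
    [ChartedSpace (EuclideanSpace ℝ (Fin d)) M]
    [IsManifold (𝓡 d) (⊤ : ℕ∞) M] [CompactSpace M]
    (Ψ : M → EuclideanSpace ℝ (Fin D))
    (hΨ : ContMDiff (𝓡 d) 𝓘(ℝ, EuclideanSpace ℝ (Fin D)) 2 Ψ)
    (himm : ∀ p : M,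
      Function.Injective (mfderiv (𝓡 d) 𝓘(ℝ, EuclideanSpace ℝ (Fin D)) Ψ p))
    {Mset : Set (EuclideanSpace ℝ (Fin D))} (hM : Ψ '' Set.univ = Mset)
    {x : EuclideanSpace ℝ (Fin D)} (hx : x ∈ Mset) :
    (⋃ x₀ ∈ Ψ ⁻¹' {x},
        ((LinearMap.range (mfderiv (𝓡 d) 𝓘(ℝ, EuclideanSpace ℝ (Fin D)) Ψ x₀).toLinearMap :
          Submodule ℝ (EuclideanSpace ℝ (Fin D))) : Set (EuclideanSpace ℝ (Fin D))))
      = {0} ∪ {v : EuclideanSpace ℝ (Fin D) | ∀ ε > 0,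
          ∃ y ∈ Mset ∩ Metric.ball x ε, y ≠ x ∧
            ‖‖y - x‖⁻¹ • (y - x) - ‖v‖⁻¹ • v‖ < ε} := by
  ext v
  simp only [Set.mem_iUnion, Set.mem_preimage, Set.mem_singleton_iff, Set.mem_union,
    Set.mem_setOf_eq, SetLike.mem_coe]
  constructor
  · rintro ⟨p, hp, hv⟩
    by_cases h0 : v = 0
    · exact Or.inl h0
    · exact Or.inr (aux_sub Ψ hΨ hM p hp hv h0)
  · rintro (h0 | hs)
    · have : x ∈ Ψ '' Set.univ := hM ▸ hx
      obtain ⟨p, -, hp⟩ := this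
      exact ⟨p, hp, h0 ▸ Submodule.zero_mem _⟩
    · have hv0 : v ≠ 0 := by
        intro h
        subst h
        obtain ⟨y, hy, hyne, hlt⟩ := hs 1 one_pos
        have hne : y - x ≠ 0 := sub_ne_zero.2 hyne
        have hnorm : ‖(‖y - x‖⁻¹ • (y - x) : EuclideanSpace ℝ (Fin D))‖ = 1 := by
          rw [norm_smul, Real.norm_eq_abs, abs_of_pos (inv_pos.2 (norm_pos_iff.2 hne)),
            inv_mul_cancel₀ (norm_ne_zero_iff.2 hne)]
        rw [norm_zero, smul_zero, sub_zero, hnorm] at hlt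
        exact lt_irrefl 1 hlt
      obtain ⟨p, hp, hv⟩ := aux_sup Ψ hΨ himm hM hv0 hs
      exact ⟨p, hp, hv⟩

open scoped Manifold

/-- The pushed-forward tangent cone of a set `Mset ⊆ ℝ^D` does not depend on the chosen
compact `C²` immersion parametrizing it, and admits an intrinsic characterization via
normalized secant directions (together with `0`). -/
theorem stmt_19 {d₁ d₂ D : ℕ}
    {M₁ : Type*} [TopologicalSpace M₁] [ChartedSpace (EuclideanSpace ℝ (Fin d₁)) M₁]
    [IsManifold (𝓡 d₁) (⊤ : ℕ∞) M₁] [CompactSpace M₁]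
    {M₂ : Type*} [TopologicalSpace M₂] [ChartedSpace (EuclideanSpace ℝ (Fin d₂)) M₂]
    [IsManifold (𝓡 d₂) (⊤ : ℕ∞) M₂] [CompactSpace M₂]
    (Ψ₁ : M₁ → EuclideanSpace ℝ (Fin D)) (Ψ₂ : M₂ → EuclideanSpace ℝ (Fin D))
    (hΨ₁ : ContMDiff (𝓡 d₁) 𝓘(ℝ, EuclideanSpace ℝ (Fin D)) 2 Ψ₁)
    (hΨ₂ : ContMDiff (𝓡 d₂) 𝓘(ℝ, EuclideanSpace ℝ (Fin D)) 2 Ψ₂)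
    (himm₁ : ∀ p : M₁,
      Function.Injective (mfderiv (𝓡 d₁) 𝓘(ℝ, EuclideanSpace ℝ (Fin D)) Ψ₁ p))
    (himm₂ : ∀ p : M₂,
      Function.Injective (mfderiv (𝓡 d₂) 𝓘(ℝ, EuclideanSpace ℝ (Fin D)) Ψ₂ p))
    (Mset : Set (EuclideanSpace ℝ (Fin D)))
    (hM₁ : Ψ₁ '' Set.univ = Mset) (hM₂ : Ψ₂ '' Set.univ = Mset)
    (x : EuclideanSpace ℝ (Fin D)) (hx : x ∈ Mset) :
    (⋃ x₀ ∈ Ψ₁ ⁻¹' {x},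
        ((LinearMap.range (mfderiv (𝓡 d₁) 𝓘(ℝ, EuclideanSpace ℝ (Fin D)) Ψ₁ x₀).toLinearMap :
          Submodule ℝ (EuclideanSpace ℝ (Fin D))) : Set (EuclideanSpace ℝ (Fin D))))
      = (⋃ x₀ ∈ Ψ₂ ⁻¹' {x},
        ((LinearMap.range (mfderiv (𝓡 d₂) 𝓘(ℝ, EuclideanSpace ℝ (Fin D)) Ψ₂ x₀).toLinearMap :
          Submodule ℝ (EuclideanSpace ℝ (Fin D))) : Set (EuclideanSpace ℝ (Fin D)))) ∧
    (⋃ x₀ ∈ Ψ₁ ⁻¹' {x},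
        ((LinearMap.range (mfderiv (𝓡 d₁) 𝓘(ℝ, EuclideanSpace ℝ (Fin D)) Ψ₁ x₀).toLinearMap :
          Submodule ℝ (EuclideanSpace ℝ (Fin D))) : Set (EuclideanSpace ℝ (Fin D))))
      = {0} ∪ {v : EuclideanSpace ℝ (Fin D) | ∀ ε > 0,
          ∃ y ∈ Mset ∩ Metric.ball x ε, y ≠ x ∧
            ‖‖y - x‖⁻¹ • (y - x) - ‖v‖⁻¹ • v‖ < ε} := by
  constructor
  · exact (aux_main Ψ₁ hΨ₁ himm₁ hM₁ hx).trans (aux_main Ψ₂ hΨ₂ himm₂ hM₂ hx).symm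
  · exact aux_main Ψ₁ hΨ₁ himm₁ hM₁ hx
end
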